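/- arXiv:2008.05823 — 5 statements merged into one kernel-verified Lean document; each statement's English description precedes it below -/
import Mathlib

section
/- For all δ with 0 < δ < 1, all L > 0, M ≥ 0, σ ≥ 0 with M² + σ² > 0, and all η with 0 < η < 3/(2L), the SAEF-SGD compression-error term (2 + 8C_δ/(3 − 2ηL)) · (1−δ)/(1−√(1−δ))² · η²L²(M² + σ²) is strictly smaller than the EF-SGD compression-error term 32L²(1−δ)(M² + σ²)/δ² · (1 + 16/δ²) · η²/(3 − 2ηL). -/
/-- The SAEF-SGD compression-error term is strictly smaller than the EF-SGD
compression-error term, for all `0 < δ < 1`, `L > 0`, `M ≥ 0`, `σ ≥ 0` with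
`M² + σ² > 0`, and all `0 < η < 3/(2L)`.  Here
`C_δ = 2(1+δ)(2−δ)/(1−√(1−δ))² + (1+δ)/δ`. -/
theorem saef_error_term_lt_ef_error_term
    (δ L M σ η : ℝ) (hδ0 : 0 < δ) (hδ1 : δ < 1)
    (hL : 0 < L) (hM : 0 ≤ M) (hσ : 0 ≤ σ) (hMσ : 0 < M ^ 2 + σ ^ 2)
    (hη0 : 0 < η) (hη : η < 3 / (2 * L)) :
    (2 + 8 * (2 * (1 + δ) * (2 - δ) / (1 - Real.sqrt (1 - δ)) ^ 2 + (1 + δ) / δ)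
          / (3 - 2 * η * L))
        * ((1 - δ) / (1 - Real.sqrt (1 - δ)) ^ 2)
        * (η ^ 2 * L ^ 2 * (M ^ 2 + σ ^ 2))
      < 32 * L ^ 2 * (1 - δ) * (M ^ 2 + σ ^ 2) / δ ^ 2 * (1 + 16 / δ ^ 2)
          * (η ^ 2 / (3 - 2 * η * L)) := by
  set s : ℝ := Real.sqrt (1 - δ) with hs
  have hs2 : s ^ 2 = 1 - δ := Real.sq_sqrt (by linarith)
  have hs0 : 0 < s := Real.sqrt_pos.mpr (by linarith)
  have hs1 : s < 1 := by nlinarith [hs2, hs0]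
  have h1s : 0 < 1 - s := by linarith
  have hDlt : 2 * η * L < 3 := by
    have := (lt_div_iff₀ (show (0:ℝ) < 2 * L by positivity)).mp hη
    nlinarith
  have hD : 0 < 3 - 2 * η * L := by linarith
  have hδs : δ = 1 - s ^ 2 := by linarith
  have hQ : 0 < 490 + 318*s + 60*s^2 - 60*s^3 - 118*s^4 - 146*s^5 - 80*s^6 - 16*s^7 := by
    have h3 : s^3 ≤ 1 := pow_le_one₀ hs0.le hs1.le
    have h4 : s^4 ≤ 1 := pow_le_one₀ hs0.le hs1.le
    have h5 : s^5 ≤ 1 := pow_le_one₀ hs0.le hs1.le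
    have h6 : s^6 ≤ 1 := pow_le_one₀ hs0.le hs1.le
    have h7 : s^7 ≤ 1 := pow_le_one₀ hs0.le hs1.le
    nlinarith [hs0.le, sq_nonneg s]
  have key : 2*(3 - 2*η*L)*(1-s)^2*(1+s)^4 + 16*(2-s^2)*(1+s^2)*(1+s)^4
      + 8*(2-s^2)*(1-s)*(1+s)^3 < 32*(1-s^2)^2 + 512 := by
    nlinarith [mul_pos h1s hQ,
      mul_pos (mul_pos hη0 hL)
        (mul_pos (pow_pos h1s 2) (pow_pos (show (0:ℝ) < 1 + s by linarith) 4))]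
  have h1s2 : (0:ℝ) < 1 - s ^ 2 := by nlinarith
  rw [hδs, ← sub_pos]
  have hdenne : (1 - s) ≠ 0 := ne_of_gt h1s
  have hDne : (3 - 2*η*L) ≠ 0 := ne_of_gt hD
  have h1s2ne : (1 - s^2) ≠ 0 := ne_of_gt h1s2
  have hrw : 32 * L ^ 2 * (1 - (1 - s^2)) * (M ^ 2 + σ ^ 2) / (1 - s^2) ^ 2
          * (1 + 16 / (1 - s^2) ^ 2) * (η ^ 2 / (3 - 2 * η * L))
      - (2 + 8 * (2 * (1 + (1 - s^2)) * (2 - (1 - s^2)) / (1 - s) ^ 2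
            + (1 + (1 - s^2)) / (1 - s^2)) / (3 - 2 * η * L))
        * ((1 - (1 - s^2)) / (1 - s) ^ 2) * (η ^ 2 * L ^ 2 * (M ^ 2 + σ ^ 2))
      = ((32*(1-s^2)^2 + 512) - (2*(3 - 2*η*L)*(1-s)^2*(1+s)^4
            + 16*(2-s^2)*(1+s^2)*(1+s)^4 + 8*(2-s^2)*(1-s)*(1+s)^3))
        * (s^2 * η^2 * L^2 * (M^2 + σ^2)) / ((3 - 2*η*L) * (1 - s^2)^4) := by
    have h1ps : (1 + s) ≠ 0 := by positivity
    generalize hDg : 3 - 2*η*L = D at hDne ⊢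
    field_simp
    ring
  rw [hrw]
  apply div_pos
  · exact mul_pos (by linarith) (by positivity)
  · positivity
end

section
/- Let e¹, …, e^K (K ≥ 1) be square-integrable, mutually independent ℝ^d-valued random vectors with a common mean m = E[e^k], and suppose Var(e^k) := E‖e^k − m‖² ≤ ‖m‖² for every k. Then (1/K)Σ_{k=1}^K E‖(1/K)Σ_{j=1}^K e^j − e^k‖² ≤ E‖(1/K)Σ_{j=1}^K e^j‖². Consequently, for any square-integrable ℝ^d-valued random vector e, the SAEF mismatch upper bound 2E‖e‖² + (2(K−1)/K²)Σ_k Var(e^k) is no larger than the EF mismatch upper bound 2E‖e‖² + 2E‖(1/K)Σ_j e^j‖². -/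
open MeasureTheory ProbabilityTheory

lemma saef_aux_inner_integrable {α E : Type*} [MeasurableSpace α] {μ : Measure α}
    [NormedAddCommGroup E] [InnerProductSpace ℝ E] {f g : α → E}
    (hf : MemLp f 2 μ) (hg : MemLp g 2 μ) :
    Integrable (fun x => (inner ℝ (f x) (g x) : ℝ)) μ := by
  have h := L2.integrable_inner (𝕜 := ℝ) (hf.toLp f) (hg.toLp g)
  refine h.congr ?_
  filter_upwards [hf.coeFn_toLp, hg.coeFn_toLp] with x h1 h2
  rw [h1, h2]

set_option maxHeartbeats 1600000 in
/-- Proposition 1: for square-integrable, mutually independent `ℝ^d`-valued random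
vectors `e¹, …, e^K` with common mean `m` and `Var(e^k) ≤ ‖m‖²`, we have
`(1/K)Σ_k E‖(1/K)Σ_j e^j − e^k‖² ≤ E‖(1/K)Σ_j e^j‖²`; consequently, for any
square-integrable random vector `e`, the SAEF mismatch upper bound
`2E‖e‖² + (2(K−1)/K²)Σ_k Var(e^k)` is at most the EF mismatch upper bound
`2E‖e‖² + 2E‖(1/K)Σ_j e^j‖²`. -/
theorem saef_mismatch_bound_le_ef_mismatch_bound
    {Ω : Type*} [MeasurableSpace Ω] (P : Measure Ω) [IsProbabilityMeasure P]
    {d K : ℕ} (hK : 1 ≤ K)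
    (e : Fin K → Ω → EuclideanSpace ℝ (Fin d))
    (hmeas : ∀ k, Measurable (e k))
    (hL2 : ∀ k, MemLp (e k) 2 P)
    (hindep : iIndepFun e P)
    (m : EuclideanSpace ℝ (Fin d)) (hmean : ∀ k, ∫ ω, e k ω ∂P = m)
    (hvar : ∀ k, ∫ ω, ‖e k ω - m‖ ^ 2 ∂P ≤ ‖m‖ ^ 2) :
    ((K : ℝ)⁻¹ * ∑ k, ∫ ω, ‖(K : ℝ)⁻¹ • (∑ j, e j ω) - e k ω‖ ^ 2 ∂P
        ≤ ∫ ω, ‖(K : ℝ)⁻¹ • (∑ j, e j ω)‖ ^ 2 ∂P)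
    ∧ ∀ (eserver : Ω → EuclideanSpace ℝ (Fin d)), MemLp eserver 2 P →
        2 * (∫ ω, ‖eserver ω‖ ^ 2 ∂P)
            + (2 * ((K : ℝ) - 1) / (K : ℝ) ^ 2) * ∑ k, ∫ ω, ‖e k ω - m‖ ^ 2 ∂P
          ≤ 2 * (∫ ω, ‖eserver ω‖ ^ 2 ∂P)
            + 2 * ∫ ω, ‖(K : ℝ)⁻¹ • (∑ j, e j ω)‖ ^ 2 ∂P := by
  have hK0 : (K : ℝ) ≠ 0 := by positivity
  have hK1 : (1 : ℝ) ≤ (K : ℝ) := by exact_mod_cast hK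
  set f : Fin K → Ω → EuclideanSpace ℝ (Fin d) := fun k ω => e k ω - m with hfdef
  have hfL2 : ∀ k, MemLp (f k) 2 P := fun k => (hL2 k).sub (memLp_const m)
  have hfint : ∀ k, Integrable (f k) P := fun k => (hfL2 k).integrable one_le_two
  have hfmean : ∀ k, ∫ ω, f k ω ∂P = 0 := by
    intro k
    rw [show f k = fun ω => e k ω - m from rfl]
    rw [integral_sub ((hL2 k).integrable one_le_two) (integrable_const m),
      hmean k, integral_const]
    simp
  have hfindep : ∀ j k, j ≠ k → IndepFun (f j) (f k) P := by
    intro j k hjk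
    exact (hindep.indepFun hjk).comp (measurable_id.sub measurable_const)
      (measurable_id.sub measurable_const)
  -- cross terms vanish
  have hcross : ∀ j k, j ≠ k → ∫ ω, (inner ℝ (f j ω) (f k ω) : ℝ) ∂P = 0 := by
    intro j k hjk
    have hpt : ∀ ω, (inner ℝ (f j ω) (f k ω) : ℝ) = ∑ i, f j ω i * f k ω i := by
      intro ω
      simp [PiLp.inner_apply, RCLike.inner_apply]
      exact Finset.sum_congr rfl fun _ _ => mul_comm _ _
    simp_rw [hpt]
    rw [integral_finset_sum]
    · refine Finset.sum_eq_zero fun i _ => ?_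
      have hind_i : IndepFun (fun ω => f j ω i) (fun ω => f k ω i) P :=
        by have := (hfindep j k hjk).comp (EuclideanSpace.proj (𝕜 := ℝ) i).continuous.measurable
             (EuclideanSpace.proj (𝕜 := ℝ) i).continuous.measurable; exact this
      have h1 : Integrable (fun ω => f j ω i) P :=
        ((EuclideanSpace.proj (𝕜 := ℝ) i).comp_memLp' (hfL2 j)).integrable one_le_two
      have h2 : Integrable (fun ω => f k ω i) P :=
        ((EuclideanSpace.proj (𝕜 := ℝ) i).comp_memLp' (hfL2 k)).integrable one_le_two
      have := IndepFun.integral_fun_mul_eq_mul_integral hind_i h1.aestronglyMeasurable h2.aestronglyMeasurable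
      have hz : ∀ l : Fin K, ∫ ω, f l ω i ∂P = 0 := by
        intro l
        have := (EuclideanSpace.proj (𝕜 := ℝ) i).integral_comp_comm (hfint l)
        simpa [hfmean l] using this
      calc ∫ ω, f j ω i * f k ω i ∂P
          = (∫ ω, f j ω i ∂P) * ∫ ω, f k ω i ∂P := this
        _ = 0 := by rw [hz j, hz k]; ring
    · intro i _
      have h1 := (EuclideanSpace.proj (𝕜 := ℝ) i).comp_memLp' (hfL2 j)
      have h2 := (EuclideanSpace.proj (𝕜 := ℝ) i).comp_memLp' (hfL2 k)
      have := saef_aux_inner_integrable (E := ℝ) h1 h2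
      refine this.congr (Filter.Eventually.of_forall fun ω => ?_)
      simp [RCLike.inner_apply]
      exact mul_comm _ _
  -- F and its properties
  set F : Ω → EuclideanSpace ℝ (Fin d) := fun ω => ∑ j, f j ω with hFdef
  have hFL2 : MemLp F 2 P := memLp_finset_sum Finset.univ (fun i _ => hfL2 i)
  have hFint : Integrable F P := hFL2.integrable one_le_two
  set V : Fin K → ℝ := fun k => ∫ ω, ‖f k ω‖ ^ 2 ∂P with hVdef
  have hVnn : ∀ k, 0 ≤ V k := fun k => integral_nonneg fun ω => sq_nonneg _
  have hVm : ∀ k, V k ≤ ‖m‖ ^ 2 := hvar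
  set SV : ℝ := ∑ k, V k with hSVdef
  have hSVnn : 0 ≤ SV := Finset.sum_nonneg fun k _ => hVnn k
  have hSVle : SV ≤ K * ‖m‖ ^ 2 := by
    calc SV ≤ ∑ _k : Fin K, ‖m‖ ^ 2 := Finset.sum_le_sum fun k _ => hVm k
      _ = K * ‖m‖ ^ 2 := by simp [Finset.sum_const, mul_comm]
  -- inner F (f k) integral
  have hinner_int : ∀ (g h : Ω → EuclideanSpace ℝ (Fin d)), MemLp g 2 P → MemLp h 2 P →
      Integrable (fun ω => (inner ℝ (g ω) (h ω) : ℝ)) P := fun g h hg hh =>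
    saef_aux_inner_integrable hg hh
  have hinnerF : ∀ k, ∫ ω, (inner ℝ (F ω) (f k ω) : ℝ) ∂P = V k := by
    intro k
    have hpt : ∀ ω, (inner ℝ (F ω) (f k ω) : ℝ) = ∑ j, (inner ℝ (f j ω) (f k ω) : ℝ) := by
      intro ω; exact sum_inner Finset.univ _ _
    simp_rw [hpt]
    rw [integral_finset_sum _ (fun j _ => hinner_int _ _ (hfL2 j) (hfL2 k))]
    rw [Finset.sum_eq_single k (fun j _ hjk => hcross j k hjk) (by simp)]
    simp_rw [real_inner_self_eq_norm_sq]
    rfl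
  have hFsq : ∫ ω, ‖F ω‖ ^ 2 ∂P = SV := by
    have hpt : ∀ ω, ‖F ω‖ ^ 2 = ∑ j, (inner ℝ (f j ω) (F ω) : ℝ) := by
      intro ω
      rw [← real_inner_self_eq_norm_sq]
      exact sum_inner Finset.univ _ _
    simp_rw [hpt]
    rw [integral_finset_sum _ (fun j _ => hinner_int _ _ (hfL2 j) hFL2)]
    refine Finset.sum_congr rfl fun j _ => ?_
    rw [show (fun ω => (inner ℝ (f j ω) (F ω) : ℝ)) = fun ω => (inner ℝ (F ω) (f j ω) : ℝ) from
      funext fun ω => real_inner_comm _ _]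
    exact hinnerF j
  have hFsq_int : Integrable (fun ω => ‖F ω‖ ^ 2) P := by
    refine (hinner_int F F hFL2 hFL2).congr (Filter.Eventually.of_forall fun ω => ?_)
    exact real_inner_self_eq_norm_sq (F ω)
  have hfsq_int : ∀ k, Integrable (fun ω => ‖f k ω‖ ^ 2) P := by
    intro k
    refine (hinner_int _ _ (hfL2 k) (hfL2 k)).congr (Filter.Eventually.of_forall fun ω => ?_)
    exact real_inner_self_eq_norm_sq (f k ω)
  -- pointwise rewriting of ∑ e j
  have hsum_e : ∀ ω, (K : ℝ)⁻¹ • (∑ j, e j ω) = (K : ℝ)⁻¹ • F ω + m := by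
    intro ω
    have : (∑ j, e j ω) = F ω + (K : ℝ) • m := by
      rw [hFdef]
      simp only [hfdef]
      rw [Finset.sum_sub_distrib, Finset.sum_const, Finset.card_univ, Fintype.card_fin,
        ← Nat.cast_smul_eq_nsmul ℝ]
      abel
    rw [this, smul_add, smul_smul, inv_mul_cancel₀ hK0, one_smul]
  -- RHS value
  have hRHS : ∫ ω, ‖(K : ℝ)⁻¹ • (∑ j, e j ω)‖ ^ 2 ∂P = (K : ℝ)⁻¹ ^ 2 * SV + ‖m‖ ^ 2 := by
    have hpt : ∀ ω, ‖(K : ℝ)⁻¹ • (∑ j, e j ω)‖ ^ 2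
        = (K : ℝ)⁻¹ ^ 2 * ‖F ω‖ ^ 2 + 2 * ((K : ℝ)⁻¹ * (inner ℝ (F ω) m : ℝ)) + ‖m‖ ^ 2 := by
      intro ω
      rw [hsum_e ω, norm_add_sq_real, norm_smul, real_inner_smul_left]
      simp [mul_pow]
    simp_rw [hpt]
    have hFm_int : Integrable (fun ω => (inner ℝ (F ω) m : ℝ)) P :=
      hinner_int _ _ hFL2 (memLp_const m)
    have i1 : Integrable (fun ω => (K : ℝ)⁻¹ ^ 2 * ‖F ω‖ ^ 2) P := hFsq_int.const_mul _
    have i2 : Integrable (fun ω => 2 * ((K : ℝ)⁻¹ * (inner ℝ (F ω) m : ℝ))) P :=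
      (hFm_int.const_mul _).const_mul 2
    have i12 : Integrable
        (fun ω => (K : ℝ)⁻¹ ^ 2 * ‖F ω‖ ^ 2 + 2 * ((K : ℝ)⁻¹ * (inner ℝ (F ω) m : ℝ))) P :=
      i1.add i2
    rw [integral_add i12 (integrable_const _), integral_add i1 i2,
      integral_const_mul _ _, integral_const_mul _ _, integral_const_mul _ _, hFsq]
    have hFm : ∫ ω, (inner ℝ (F ω) m : ℝ) ∂P = 0 := by
      have hpt2 : ∀ ω, (inner ℝ (F ω) m : ℝ) = (innerSL ℝ m) (F ω) := by
        intro ω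
        simp only [innerSL_apply_apply]
        exact real_inner_comm _ _
      simp_rw [hpt2]
      rw [(innerSL ℝ m).integral_comp_comm hFint]
      have hF0 : ∫ ω, F ω ∂P = 0 := by
        rw [hFdef, integral_finset_sum _ (fun j _ => hfint j)]
        simp [hfmean]
      rw [hF0]; simp
    rw [hFm]
    simp [measure_univ]
  -- LHS per-k value
  have hA : ∀ k, ∫ ω, ‖(K : ℝ)⁻¹ • (∑ j, e j ω) - e k ω‖ ^ 2 ∂P
      = (K : ℝ)⁻¹ ^ 2 * SV - 2 * ((K : ℝ)⁻¹ * V k) + V k := by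
    intro k
    have hpt : ∀ ω, ‖(K : ℝ)⁻¹ • (∑ j, e j ω) - e k ω‖ ^ 2
        = (K : ℝ)⁻¹ ^ 2 * ‖F ω‖ ^ 2 - 2 * ((K : ℝ)⁻¹ * (inner ℝ (F ω) (f k ω) : ℝ))
          + ‖f k ω‖ ^ 2 := by
      intro ω
      have : (K : ℝ)⁻¹ • (∑ j, e j ω) - e k ω = (K : ℝ)⁻¹ • F ω - f k ω := by
        rw [hsum_e ω]
        simp only [hfdef]
        abel
      rw [this, norm_sub_sq_real, norm_smul, real_inner_smul_left]
      simp [mul_pow]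
    simp_rw [hpt]
    have hFk_int : Integrable (fun ω => (inner ℝ (F ω) (f k ω) : ℝ)) P :=
      hinner_int _ _ hFL2 (hfL2 k)
    have i1 : Integrable (fun ω => (K : ℝ)⁻¹ ^ 2 * ‖F ω‖ ^ 2) P := hFsq_int.const_mul _
    have i2 : Integrable (fun ω => 2 * ((K : ℝ)⁻¹ * (inner ℝ (F ω) (f k ω) : ℝ))) P :=
      (hFk_int.const_mul _).const_mul 2
    have i12 : Integrable
        (fun ω => (K : ℝ)⁻¹ ^ 2 * ‖F ω‖ ^ 2 - 2 * ((K : ℝ)⁻¹ * (inner ℝ (F ω) (f k ω) : ℝ))) P :=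
      i1.sub i2
    rw [integral_add i12 (hfsq_int k), integral_sub i1 i2,
      integral_const_mul _ _, integral_const_mul _ _, integral_const_mul _ _, hFsq, hinnerF k]
  -- now pure arithmetic
  have hsumA : ∑ k, ∫ ω, ‖(K : ℝ)⁻¹ • (∑ j, e j ω) - e k ω‖ ^ 2 ∂P
      = (K : ℝ) * ((K : ℝ)⁻¹ ^ 2 * SV) - 2 * ((K : ℝ)⁻¹ * SV) + SV := by
    rw [Finset.sum_congr rfl (fun k _ => hA k)]
    rw [Finset.sum_add_distrib, Finset.sum_sub_distrib, Finset.sum_const, Finset.card_univ,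
      Fintype.card_fin, ← Finset.mul_sum, ← Finset.mul_sum, ← hSVdef]
    push_cast
    ring_nf
  have hkey : ∀ c M S : ℝ, 1 ≤ c → 0 ≤ S → 0 ≤ M → S ≤ c * M →
      c⁻¹ * (c * (c⁻¹ ^ 2 * S) - 2 * (c⁻¹ * S) + S) ≤ c⁻¹ ^ 2 * S + M := by
    intro c M S hc hS hM hSc
    have hc0 : (0:ℝ) < c := lt_of_lt_of_le zero_lt_one hc
    have hu : c⁻¹ * c = 1 := inv_mul_cancel₀ hc0.ne'
    have hu0 : 0 ≤ c⁻¹ := le_of_lt (inv_pos.mpr hc0)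
    have h1 : c⁻¹ * S ≤ M := by
      have := mul_le_mul_of_nonneg_left hSc hu0
      rwa [← mul_assoc, hu, one_mul] at this
    nlinarith [mul_nonneg (mul_nonneg hu0 hu0) hS, mul_nonneg hu0 hS, sq_nonneg c⁻¹]
  clear_value f F V SV
  constructor
  · rw [hsumA, hRHS]
    exact hkey (K : ℝ) (‖m‖ ^ 2) SV hK1 hSVnn (sq_nonneg _) hSVle
  · intro eserver _
    rw [hRHS]
    refine add_le_add le_rfl ?_
    have hkey2 : ∀ c M S : ℝ, 1 ≤ c → 0 ≤ S → 0 ≤ M → S ≤ c * M →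
        2 * (c - 1) / c ^ 2 * S ≤ 2 * (c⁻¹ ^ 2 * S + M) := by
      intro c M S hc hS hM hSc
      have hc0 : (0:ℝ) < c := lt_of_lt_of_le zero_lt_one hc
      have hc2 : (0:ℝ) < c ^ 2 := by positivity
      have h2 : (c⁻¹) ^ 2 * S = S / c ^ 2 := by
        rw [inv_pow]; exact (div_eq_inv_mul S _).symm
      rw [h2, div_mul_eq_mul_div, div_le_iff₀ hc2,
        show (2 * (S / c ^ 2 + M)) * c ^ 2 = 2 * S + 2 * M * c ^ 2 by field_simp]
      have h3 : 0 ≤ (c - 1) * (c * M - S) := mul_nonneg (by linarith) (by linarith)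
      have h4 : 0 ≤ c * M := mul_nonneg hc0.le hM
      nlinarith [h3, h4, hS]
    exact hkey2 (K : ℝ) (‖m‖ ^ 2) SV hK1 hSVnn (sq_nonneg _) hSVle
end

section
/- Under the SAEF-SGD-with-momentum dynamics with learning rates 0 < η_t ≤ η_max, for every β₁ with 0 < β₁ < δ/(1−δ) and every t ≥ 0: E‖e^k_{t+1}‖² ≤ [(1−δ)(1 + 1/β₁)/(1 − (1−δ)(1+β₁))] · η_max²(M² + σ²)/(1−μ)². In particular, taking β₁ = 1/√(1−δ) − 1 gives E‖e^k_{t+1}‖² ≤ (1−δ)/(1−√(1−δ))² · η_max²(M² + σ²)/(1−μ)². -/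
open MeasureTheory
open scoped ENNReal

section SAEFAux

variable {Ω : Type*} [MeasurableSpace Ω] {P : Measure Ω} {E : Type*} [NormedAddCommGroup E]
  [NormedSpace ℝ E]

lemma saef_sq_int {f : Ω → E} (hf : MemLp f 2 P) :
    ∫ ω, ‖f ω‖ ^ 2 ∂P = ((eLpNorm f 2 P).toReal) ^ 2 := by
  rw [hf.eLpNorm_eq_integral_rpow_norm two_ne_zero ENNReal.ofNat_ne_top]
  have h1 : (0:ℝ) ≤ ∫ a, ‖f a‖ ^ (2:ℝ≥0∞).toReal ∂P :=
    integral_nonneg fun a => Real.rpow_nonneg (norm_nonneg _) _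
  rw [ENNReal.toReal_ofReal (Real.rpow_nonneg h1 _)]
  rw [← Real.rpow_natCast ((∫ a, ‖f a‖ ^ (2:ℝ≥0∞).toReal ∂P) ^ (2:ℝ≥0∞).toReal⁻¹) 2,
    ← Real.rpow_mul h1]
  simp [Real.rpow_two]

omit [NormedSpace ℝ E] in
lemma saef_integrable_sq {f : Ω → E} (hf : MemLp f 2 P) :
    Integrable (fun ω => ‖f ω‖ ^ 2) P := by
  have := hf.integrable_norm_rpow two_ne_zero ENNReal.ofNat_ne_top
  simpa [Real.rpow_two] using this

omit [NormedSpace ℝ E] in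
lemma saef_tri {f g : Ω → E} (hf : MemLp f 2 P) (hg : MemLp g 2 P) :
    (eLpNorm (fun ω => f ω + g ω) 2 P).toReal
      ≤ (eLpNorm f 2 P).toReal + (eLpNorm g 2 P).toReal := by
  have h := eLpNorm_add_le hf.aestronglyMeasurable hg.aestronglyMeasurable
    (by norm_num : (1:ℝ≥0∞) ≤ 2)
  have := ENNReal.toReal_mono (ENNReal.add_ne_top.2 ⟨hf.2.ne, hg.2.ne⟩) h
  rwa [ENNReal.toReal_add hf.2.ne hg.2.ne] at this

lemma saef_sq_add_le (β x y : ℝ) (hβ : 0 < β) :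
    (x + y) ^ 2 ≤ (1 + β) * x ^ 2 + (1 + 1 / β) * y ^ 2 := by
  have key : (1 + β) * x ^ 2 + (1 + 1 / β) * y ^ 2 - (x + y) ^ 2 = (β * x - y) ^ 2 / β := by
    field_simp
    ring
  nlinarith [div_nonneg (sq_nonneg (β * x - y)) hβ.le]

lemma saef_geom_le (ρ : ℝ) (h0 : 0 ≤ ρ) (h1 : ρ < 1) (n : ℕ) :
    ∑ j ∈ Finset.range n, ρ ^ j ≤ 1 / (1 - ρ) := by
  have hpos : 0 < 1 - ρ := by linarith
  induction n with
  | zero =>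
    simp only [Finset.range_zero, Finset.sum_empty]
    positivity
  | succ n ih =>
    rw [geom_sum_succ]
    have h2 : ρ * (∑ j ∈ Finset.range n, ρ ^ j) ≤ ρ * (1 / (1 - ρ)) :=
      mul_le_mul_of_nonneg_left ih h0
    have h3 : ρ * (1 / (1 - ρ)) + 1 = 1 / (1 - ρ) := by field_simp; ring
    linarith

end SAEFAux

/-- Bound on the local compression error of SAEF-SGD with momentum:
for every `β₁ ∈ (0, δ/(1−δ))` and every `t`,
`E‖e^k_{t+1}‖² ≤ [(1−δ)(1+1/β₁)/(1−(1−δ)(1+β₁))]·η_max²(M²+σ²)/(1−μ)²`,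
and in particular (taking `β₁ = 1/√(1−δ) − 1`)
`E‖e^k_{t+1}‖² ≤ (1−δ)/(1−√(1−δ))²·η_max²(M²+σ²)/(1−μ)²`. -/
theorem local_error_second_moment_bound
    {Ω : Type*} [MeasurableSpace Ω] (P : Measure Ω) [IsProbabilityMeasure P]
    {d K : ℕ} (hK : 1 ≤ K)
    (μ M σ δ ηmax : ℝ) (hμ0 : 0 ≤ μ) (hμ1 : μ < 1)
    (hM : 0 ≤ M) (hσ : 0 ≤ σ) (hδ0 : 0 < δ) (hδ1 : δ < 1)
    (Co : EuclideanSpace ℝ (Fin d) → EuclideanSpace ℝ (Fin d))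
    (hCo : ∀ v, ‖Co v - v‖ ^ 2 ≤ (1 - δ) * ‖v‖ ^ 2)
    (η : ℕ → ℝ) (hη0 : ∀ t, 0 < η t) (hηmax : ∀ t, η t ≤ ηmax)
    (g m e : Fin K → ℕ → Ω → EuclideanSpace ℝ (Fin d))
    (hgL2 : ∀ k t, MemLp (g k t) 2 P)
    (hgbound : ∀ k t, ∫ ω, ‖g k t ω‖ ^ 2 ∂P ≤ M ^ 2 + σ ^ 2)
    (hm0 : ∀ k ω, m k 0 ω = 0) (he0 : ∀ k ω, e k 0 ω = 0)
    (hm : ∀ k t ω, m k (t + 1) ω = μ • m k t ω + g k t ω)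
    (Δ : Fin K → ℕ → Ω → EuclideanSpace ℝ (Fin d))
    (hΔ : ∀ k t ω, Δ k (t + 1) ω = e k t ω + η t • m k (t + 1) ω)
    (he : ∀ k t ω, e k (t + 1) ω = Δ k (t + 1) ω - Co (Δ k (t + 1) ω)) :
    (∀ β₁ : ℝ, 0 < β₁ → β₁ < δ / (1 - δ) → ∀ k t,
        ∫ ω, ‖e k (t + 1) ω‖ ^ 2 ∂P
          ≤ ((1 - δ) * (1 + 1 / β₁) / (1 - (1 - δ) * (1 + β₁)))
              * (ηmax ^ 2 * (M ^ 2 + σ ^ 2) / (1 - μ) ^ 2))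
    ∧ ∀ k t, ∫ ω, ‖e k (t + 1) ω‖ ^ 2 ∂P
        ≤ ((1 - δ) / (1 - Real.sqrt (1 - δ)) ^ 2)
            * (ηmax ^ 2 * (M ^ 2 + σ ^ 2) / (1 - μ) ^ 2) := by
  have hμd : (0:ℝ) < 1 - μ := by linarith
  have hB : (0:ℝ) ≤ M ^ 2 + σ ^ 2 := by positivity
  have hηm : (0:ℝ) ≤ ηmax := (hη0 0).le.trans (hηmax 0)
  have hδ1' : (0:ℝ) < 1 - δ := by linarith
  -- MemLp of momentum
  have hmL2 : ∀ k t, MemLp (m k t) 2 P := by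
    intro k t
    induction t with
    | zero =>
      have h : m k 0 = fun _ => (0 : EuclideanSpace ℝ (Fin d)) := funext (hm0 k)
      rw [h]; exact MemLp.zero'
    | succ t ih =>
      have h : m k (t + 1) = fun ω => μ • m k t ω + g k t ω := funext (hm k t)
      rw [h]; exact (ih.const_smul μ).add (hgL2 k t)
  -- L² norm bound of g
  have hgN : ∀ k t, (eLpNorm (g k t) 2 P).toReal ≤ Real.sqrt (M ^ 2 + σ ^ 2) := by
    intro k t
    have h1 : ((eLpNorm (g k t) 2 P).toReal) ^ 2 ≤ M ^ 2 + σ ^ 2 := by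
      rw [← saef_sq_int (hgL2 k t)]; exact hgbound k t
    have h2 : (0:ℝ) ≤ (eLpNorm (g k t) 2 P).toReal := ENNReal.toReal_nonneg
    exact (Real.le_sqrt h2 hB).2 h1
  -- L² norm bound of m, by induction
  have hmN : ∀ k t, (eLpNorm (m k t) 2 P).toReal ≤ Real.sqrt (M ^ 2 + σ ^ 2) / (1 - μ) := by
    intro k t
    induction t with
    | zero =>
      have h : m k 0 = fun _ => (0 : EuclideanSpace ℝ (Fin d)) := funext (hm0 k)
      rw [h]
      simp only [eLpNorm_zero']
      positivity
    | succ t ih =>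
      have h : m k (t + 1) = fun ω => (μ • m k t) ω + g k t ω := funext (hm k t)
      rw [h]
      have htri := saef_tri ((hmL2 k t).const_smul μ) (hgL2 k t)
      have hsm : (eLpNorm (μ • m k t) 2 P).toReal = μ * (eLpNorm (m k t) 2 P).toReal := by
        rw [eLpNorm_const_smul]
        rw [ENNReal.toReal_mul]
        congr 1
        simp [abs_of_nonneg hμ0]
      have hkey : μ * (Real.sqrt (M ^ 2 + σ ^ 2) / (1 - μ)) + Real.sqrt (M ^ 2 + σ ^ 2)
          = Real.sqrt (M ^ 2 + σ ^ 2) / (1 - μ) := by field_simp; ring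
      have h4 : μ * (eLpNorm (m k t) 2 P).toReal
          ≤ μ * (Real.sqrt (M ^ 2 + σ ^ 2) / (1 - μ)) := mul_le_mul_of_nonneg_left ih hμ0
      calc (eLpNorm (fun ω => (μ • m k t) ω + g k t ω) 2 P).toReal
          ≤ (eLpNorm (μ • m k t) 2 P).toReal + (eLpNorm (g k t) 2 P).toReal := htri
        _ ≤ Real.sqrt (M ^ 2 + σ ^ 2) / (1 - μ) := by
            rw [hsm]; linarith [hgN k t]
  -- second moment bound of m
  have hmI : ∀ k t, ∫ ω, ‖m k t ω‖ ^ 2 ∂P ≤ (M ^ 2 + σ ^ 2) / (1 - μ) ^ 2 := by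
    intro k t
    rw [saef_sq_int (hmL2 k t)]
    have h1 : ((eLpNorm (m k t) 2 P).toReal) ^ 2
        ≤ (Real.sqrt (M ^ 2 + σ ^ 2) / (1 - μ)) ^ 2 :=
      pow_le_pow_left₀ ENNReal.toReal_nonneg (hmN k t) 2
    calc ((eLpNorm (m k t) 2 P).toReal) ^ 2
        ≤ (Real.sqrt (M ^ 2 + σ ^ 2) / (1 - μ)) ^ 2 := h1
      _ = (M ^ 2 + σ ^ 2) / (1 - μ) ^ 2 := by
          rw [div_pow, Real.sq_sqrt hB]
  -- main bound
  have main : ∀ β₁ : ℝ, 0 < β₁ → β₁ < δ / (1 - δ) → ∀ k t,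
      ∫ ω, ‖e k (t + 1) ω‖ ^ 2 ∂P
        ≤ ((1 - δ) * (1 + 1 / β₁) / (1 - (1 - δ) * (1 + β₁)))
            * (ηmax ^ 2 * (M ^ 2 + σ ^ 2) / (1 - μ) ^ 2) := by
    intro β₁ hβ0 hβδ k t
    set ρ := (1 - δ) * (1 + β₁) with hρdef
    set c := (1 - δ) * (1 + 1 / β₁) with hcdef
    set D := ηmax ^ 2 * (M ^ 2 + σ ^ 2) / (1 - μ) ^ 2 with hDdef
    have hρ0 : 0 ≤ ρ := by positivity
    have hρ1 : ρ < 1 := by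
      rw [lt_div_iff₀ hδ1'] at hβδ
      nlinarith
    have hc0 : 0 ≤ c := by positivity
    have hD0 : 0 ≤ D := by positivity
    -- pointwise bound by induction
    have ptwise : ∀ n ω, ‖e k n ω‖ ^ 2
        ≤ ∑ s ∈ Finset.range n, ρ ^ (n - 1 - s) * (c * (η s) ^ 2 * ‖m k (s + 1) ω‖ ^ 2) := by
      intro n
      induction n with
      | zero => intro ω; simp [he0 k ω]
      | succ n ih =>
        intro ω
        have step : ‖e k (n + 1) ω‖ ^ 2
            ≤ ρ * ‖e k n ω‖ ^ 2 + c * (η n) ^ 2 * ‖m k (n + 1) ω‖ ^ 2 := by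
          rw [he k n ω]
          have h1 : ‖Δ k (n + 1) ω - Co (Δ k (n + 1) ω)‖ ^ 2
              ≤ (1 - δ) * ‖Δ k (n + 1) ω‖ ^ 2 := by
            rw [norm_sub_rev]; exact hCo _
          have h2 : ‖Δ k (n + 1) ω‖ ≤ ‖e k n ω‖ + η n * ‖m k (n + 1) ω‖ := by
            rw [hΔ k n ω]
            refine (norm_add_le _ _).trans ?_
            rw [norm_smul, Real.norm_eq_abs, abs_of_pos (hη0 n)]
          have h3 : ‖Δ k (n + 1) ω‖ ^ 2 ≤ (‖e k n ω‖ + η n * ‖m k (n + 1) ω‖) ^ 2 :=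
            pow_le_pow_left₀ (norm_nonneg _) h2 2
          have h4 := saef_sq_add_le β₁ (‖e k n ω‖) (η n * ‖m k (n + 1) ω‖) hβ0
          have h5 : (1 - δ) * ‖Δ k (n + 1) ω‖ ^ 2
              ≤ (1 - δ) * ((1 + β₁) * ‖e k n ω‖ ^ 2
                  + (1 + 1 / β₁) * (η n * ‖m k (n + 1) ω‖) ^ 2) :=
            mul_le_mul_of_nonneg_left (h3.trans h4) hδ1'.le
          calc ‖Δ k (n + 1) ω - Co (Δ k (n + 1) ω)‖ ^ 2
              ≤ (1 - δ) * ‖Δ k (n + 1) ω‖ ^ 2 := h1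
            _ ≤ (1 - δ) * ((1 + β₁) * ‖e k n ω‖ ^ 2
                  + (1 + 1 / β₁) * (η n * ‖m k (n + 1) ω‖) ^ 2) := h5
            _ = ρ * ‖e k n ω‖ ^ 2 + c * (η n) ^ 2 * ‖m k (n + 1) ω‖ ^ 2 := by
                rw [hρdef, hcdef]; ring
        have hsum : ρ * (∑ s ∈ Finset.range n, ρ ^ (n - 1 - s)
              * (c * (η s) ^ 2 * ‖m k (s + 1) ω‖ ^ 2))
            = ∑ s ∈ Finset.range n, ρ ^ (n - s) * (c * (η s) ^ 2 * ‖m k (s + 1) ω‖ ^ 2) := by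
          rw [Finset.mul_sum]
          refine Finset.sum_congr rfl fun s hs => ?_
          have hs' : s < n := Finset.mem_range.1 hs
          have hexp : n - s = (n - 1 - s) + 1 := by omega
          rw [hexp, pow_succ]
          ring
        calc ‖e k (n + 1) ω‖ ^ 2
            ≤ ρ * ‖e k n ω‖ ^ 2 + c * (η n) ^ 2 * ‖m k (n + 1) ω‖ ^ 2 := step
          _ ≤ ρ * (∑ s ∈ Finset.range n, ρ ^ (n - 1 - s)
                * (c * (η s) ^ 2 * ‖m k (s + 1) ω‖ ^ 2))
                + c * (η n) ^ 2 * ‖m k (n + 1) ω‖ ^ 2 := by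
              have := mul_le_mul_of_nonneg_left (ih ω) hρ0
              linarith
          _ = ∑ s ∈ Finset.range (n + 1), ρ ^ (n + 1 - 1 - s)
                * (c * (η s) ^ 2 * ‖m k (s + 1) ω‖ ^ 2) := by
              rw [Finset.sum_range_succ, hsum]
              simp
        -- end pointwise
    -- integrate
    have hint : ∀ s : ℕ, Integrable
        (fun ω => ρ ^ (t - s) * (c * (η s) ^ 2 * ‖m k (s + 1) ω‖ ^ 2)) P := by
      intro s
      have := (saef_integrable_sq (hmL2 k (s + 1))).const_mul (ρ ^ (t - s) * (c * (η s) ^ 2))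
      simpa [mul_assoc] using this
    have hHint : Integrable (fun ω => ∑ s ∈ Finset.range (t + 1),
        ρ ^ (t - s) * (c * (η s) ^ 2 * ‖m k (s + 1) ω‖ ^ 2)) P :=
      integrable_finset_sum _ fun s _ => hint s
    have hmono : ∫ ω, ‖e k (t + 1) ω‖ ^ 2 ∂P
        ≤ ∫ ω, (∑ s ∈ Finset.range (t + 1),
            ρ ^ (t - s) * (c * (η s) ^ 2 * ‖m k (s + 1) ω‖ ^ 2)) ∂P := by
      refine integral_mono_of_nonneg (Filter.Eventually.of_forall fun ω => by positivity)
        hHint (Filter.Eventually.of_forall fun ω => ?_)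
      have := ptwise (t + 1) ω
      simpa using this
    have hswap : ∫ ω, (∑ s ∈ Finset.range (t + 1),
          ρ ^ (t - s) * (c * (η s) ^ 2 * ‖m k (s + 1) ω‖ ^ 2)) ∂P
        = ∑ s ∈ Finset.range (t + 1),
            ρ ^ (t - s) * (c * (η s) ^ 2 * ∫ ω, ‖m k (s + 1) ω‖ ^ 2 ∂P) := by
      rw [integral_finset_sum _ fun s _ => hint s]
      refine Finset.sum_congr rfl fun s _ => ?_
      calc ∫ ω, ρ ^ (t - s) * (c * (η s) ^ 2 * ‖m k (s + 1) ω‖ ^ 2) ∂P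
          = ∫ ω, (ρ ^ (t - s) * (c * (η s) ^ 2)) * ‖m k (s + 1) ω‖ ^ 2 ∂P := by
            simp_rw [mul_assoc]
        _ = (ρ ^ (t - s) * (c * (η s) ^ 2)) * ∫ ω, ‖m k (s + 1) ω‖ ^ 2 ∂P :=
            integral_const_mul _ _
        _ = ρ ^ (t - s) * (c * (η s) ^ 2 * ∫ ω, ‖m k (s + 1) ω‖ ^ 2 ∂P) := by ring
    have hterm : ∀ s : ℕ,
        ρ ^ (t - s) * (c * (η s) ^ 2 * ∫ ω, ‖m k (s + 1) ω‖ ^ 2 ∂P)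
          ≤ ρ ^ (t - s) * (c * D) := by
      intro s
      refine mul_le_mul_of_nonneg_left ?_ (pow_nonneg hρ0 _)
      have hη2 : (η s) ^ 2 ≤ ηmax ^ 2 := pow_le_pow_left₀ (hη0 s).le (hηmax s) 2
      have hm2 : ∫ ω, ‖m k (s + 1) ω‖ ^ 2 ∂P ≤ (M ^ 2 + σ ^ 2) / (1 - μ) ^ 2 := hmI k (s + 1)
      have hm2' : (0:ℝ) ≤ ∫ ω, ‖m k (s + 1) ω‖ ^ 2 ∂P :=
        integral_nonneg fun ω => by positivity
      have : (η s) ^ 2 * ∫ ω, ‖m k (s + 1) ω‖ ^ 2 ∂P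
          ≤ ηmax ^ 2 * ((M ^ 2 + σ ^ 2) / (1 - μ) ^ 2) :=
        mul_le_mul hη2 hm2 hm2' (by positivity)
      have hD : D = ηmax ^ 2 * ((M ^ 2 + σ ^ 2) / (1 - μ) ^ 2) := by
        rw [hDdef]; ring
      calc c * (η s) ^ 2 * ∫ ω, ‖m k (s + 1) ω‖ ^ 2 ∂P
          = c * ((η s) ^ 2 * ∫ ω, ‖m k (s + 1) ω‖ ^ 2 ∂P) := by ring
        _ ≤ c * (ηmax ^ 2 * ((M ^ 2 + σ ^ 2) / (1 - μ) ^ 2)) :=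
            mul_le_mul_of_nonneg_left this hc0
        _ = c * D := by rw [hD]
    have hgeom : ∑ s ∈ Finset.range (t + 1), ρ ^ (t - s) * (c * D)
        ≤ (c / (1 - ρ)) * D := by
      have hrefl : ∑ s ∈ Finset.range (t + 1), ρ ^ (t - s) * (c * D)
          = ∑ j ∈ Finset.range (t + 1), ρ ^ j * (c * D) := by
        have := Finset.sum_range_reflect (fun j => ρ ^ j * (c * D)) (t + 1)
        simpa using this
      rw [hrefl, ← Finset.sum_mul]
      have := saef_geom_le ρ hρ0 hρ1 (t + 1)
      calc (∑ j ∈ Finset.range (t + 1), ρ ^ j) * (c * D)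
          ≤ (1 / (1 - ρ)) * (c * D) :=
            mul_le_mul_of_nonneg_right this (by positivity)
        _ = (c / (1 - ρ)) * D := by ring
    calc ∫ ω, ‖e k (t + 1) ω‖ ^ 2 ∂P
        ≤ ∫ ω, (∑ s ∈ Finset.range (t + 1),
            ρ ^ (t - s) * (c * (η s) ^ 2 * ‖m k (s + 1) ω‖ ^ 2)) ∂P := hmono
      _ = ∑ s ∈ Finset.range (t + 1),
            ρ ^ (t - s) * (c * (η s) ^ 2 * ∫ ω, ‖m k (s + 1) ω‖ ^ 2 ∂P) := hswap
      _ ≤ ∑ s ∈ Finset.range (t + 1), ρ ^ (t - s) * (c * D) :=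
            Finset.sum_le_sum fun s _ => hterm s
      _ ≤ (c / (1 - ρ)) * D := hgeom
  refine ⟨main, ?_⟩
  -- second part
  intro k t
  set x := Real.sqrt (1 - δ) with hxdef
  have hx0 : 0 < x := Real.sqrt_pos.2 hδ1'
  have hx2 : x ^ 2 = 1 - δ := Real.sq_sqrt hδ1'.le
  have hx1 : x < 1 := by nlinarith
  set β₁ := (1 - x) / x with hβdef
  have hβ0 : 0 < β₁ := div_pos (by linarith) hx0
  have hβδ : β₁ < δ / (1 - δ) := by
    rw [hβdef, div_lt_div_iff₀ hx0 hδ1']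
    nlinarith
  refine (main β₁ hβ0 hβδ k t).trans (le_of_eq ?_)
  have hx1' : (1:ℝ) - x ≠ 0 := by linarith
  have h1 : (1:ℝ) + β₁ = 1 / x := by rw [hβdef]; field_simp; ring
  have h2 : (1 - δ) * (1 + β₁) = x := by
    rw [h1, ← hx2]; field_simp
  have h3 : (1:ℝ) + 1 / β₁ = 1 / (1 - x) := by
    rw [hβdef]; field_simp; ring
  rw [h2, h3, ← hx2]
  congr 1
  field_simp
end

section
/- Under the SAEF-SGD-with-momentum dynamics with learning rates 0 < η_t ≤ η_max, for every β₁ with 0 < β₁ < δ/(1−δ) and every t ≥ 0: (1/K)Σ_{k=1}^K E‖(1/K)Σ_{j=1}^K e^j_t − e^k_t‖² ≤ ((K−1)/K) · [(1−δ)(1 + 1/β₁)/(1 − (1−δ)(1+β₁))] · η_max²(M² + σ²)/(1−μ)². -/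
open MeasureTheory ProbabilityTheory

local notation "⟪" x ", " y "⟫" => @inner ℝ _ _ x y

private lemma saef_young_sq {a b β : ℝ} (hβ : 0 < β) :
    (a + b) ^ 2 ≤ (1 + β) * a ^ 2 + (1 + 1 / β) * b ^ 2 := by
  have hc : β * (1 / β) = 1 := by field_simp
  nlinarith [sq_nonneg (β * a - b), sq_nonneg (a - b), mul_pos hβ hβ]

private lemma saef_mom_sq {a b μ : ℝ} (hμ0 : 0 ≤ μ) (hμ1 : μ < 1) :
    (μ * a + b) ^ 2 ≤ μ * a ^ 2 + b ^ 2 / (1 - μ) := by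
  have h1 : 0 < 1 - μ := by linarith
  have key : 0 ≤ μ * ((1 - μ) * a - b) ^ 2 := mul_nonneg hμ0 (sq_nonneg _)
  have h2 : b ^ 2 / (1 - μ) * (1 - μ) = b ^ 2 := by field_simp
  nlinarith [key, div_nonneg (sq_nonneg b) h1.le]

private lemma saef_norm_add_sq_young {F : Type*} [NormedAddCommGroup F] (x y : F)
    {β : ℝ} (hβ : 0 < β) :
    ‖x + y‖ ^ 2 ≤ (1 + β) * ‖x‖ ^ 2 + (1 + 1 / β) * ‖y‖ ^ 2 := by
  have h1 : ‖x + y‖ ^ 2 ≤ (‖x‖ + ‖y‖) ^ 2 :=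
    pow_le_pow_left₀ (norm_nonneg _) (norm_add_le x y) 2
  exact h1.trans (saef_young_sq hβ)

private lemma saef_intsq {Ω : Type*} [MeasurableSpace Ω] {P : Measure Ω} {F : Type*}
    [NormedAddCommGroup F] {f : Ω → F} (hf : MemLp f 2 P) :
    Integrable (fun ω => ‖f ω‖ ^ 2) P := by
  have := hf.integrable_norm_rpow two_ne_zero ENNReal.ofNat_ne_top
  simpa [ENNReal.toReal_ofNat, Real.rpow_natCast] using this

private lemma saef_geom {r b x : ℝ} (hr : 1 - r ≠ 0) :
    r * (b / (1 - r) * x) + b * x = b / (1 - r) * x := by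
  field_simp
  ring

private lemma saef_sum_dev_sq {F : Type*} [NormedAddCommGroup F] [InnerProductSpace ℝ F]
    {K : ℕ} (hK : 1 ≤ K) (v : Fin K → F) :
    ∑ k, ‖(K:ℝ)⁻¹ • (∑ j, v j) - v k‖ ^ 2
      = ∑ k, ‖v k‖ ^ 2 - (K:ℝ) * ‖(K:ℝ)⁻¹ • (∑ j, v j)‖ ^ 2 := by
  have hK0 : (K:ℝ) ≠ 0 := Nat.cast_ne_zero.mpr (by omega)
  set b : F := (K:ℝ)⁻¹ • (∑ j, v j) with hb
  have hs : (∑ j, v j) = (K:ℝ) • b := by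
    rw [hb, smul_smul, mul_inv_cancel₀ hK0, one_smul]
  have h1 : ∑ k, ⟪b, v k⟫ = (K:ℝ) * ‖b‖ ^ 2 := by
    rw [← inner_sum, hs, real_inner_smul_right, real_inner_self_eq_norm_sq]
  have h2 : ∀ k : Fin K, ‖b - v k‖ ^ 2 = ‖b‖ ^ 2 - 2 * ⟪b, v k⟫ + ‖v k‖ ^ 2 :=
    fun k => norm_sub_sq_real b (v k)
  rw [Finset.sum_congr rfl fun k _ => h2 k]
  rw [Finset.sum_add_distrib, Finset.sum_sub_distrib, Finset.sum_const,
    ← Finset.mul_sum, h1]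
  simp only [Finset.card_univ, Fintype.card_fin, nsmul_eq_mul]
  ring

set_option maxHeartbeats 1000000 in
/-- Bound on the average squared deviation of the local compression errors of
SAEF-SGD with momentum from their empirical mean: for every `β₁ ∈ (0, δ/(1−δ))`
and every `t`, `(1/K)Σ_k E‖(1/K)Σ_j e^j_t − e^k_t‖²
  ≤ ((K−1)/K)·[(1−δ)(1+1/β₁)/(1−(1−δ)(1+β₁))]·η_max²(M²+σ²)/(1−μ)²`. -/
theorem local_error_deviation_bound
    {Ω : Type*} [MeasurableSpace Ω] (P : Measure Ω) [IsProbabilityMeasure P]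
    {d K : ℕ} (hK : 1 ≤ K)
    (μ M σ δ ηmax : ℝ) (hμ0 : 0 ≤ μ) (hμ1 : μ < 1)
    (hM : 0 ≤ M) (hσ : 0 ≤ σ) (hδ0 : 0 < δ) (hδ1 : δ < 1)
    (Co : EuclideanSpace ℝ (Fin d) → EuclideanSpace ℝ (Fin d))
    (hCo : ∀ v, ‖Co v - v‖ ^ 2 ≤ (1 - δ) * ‖v‖ ^ 2)
    (η : ℕ → ℝ) (hη0 : ∀ t, 0 < η t) (hηmax : ∀ t, η t ≤ ηmax)
    (g m e : Fin K → ℕ → Ω → EuclideanSpace ℝ (Fin d))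
    (hgL2 : ∀ k t, MemLp (g k t) 2 P)
    (hgbound : ∀ k t, ∫ ω, ‖g k t ω‖ ^ 2 ∂P ≤ M ^ 2 + σ ^ 2)
    (hm0 : ∀ k ω, m k 0 ω = 0) (he0 : ∀ k ω, e k 0 ω = 0)
    (hm : ∀ k t ω, m k (t + 1) ω = μ • m k t ω + g k t ω)
    (Δ : Fin K → ℕ → Ω → EuclideanSpace ℝ (Fin d))
    (hΔ : ∀ k t ω, Δ k (t + 1) ω = e k t ω + η t • m k (t + 1) ω)
    (he : ∀ k t ω, e k (t + 1) ω = Δ k (t + 1) ω - Co (Δ k (t + 1) ω))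
    -- for each fixed `t`, the local errors `e^1_t, …, e^K_t` are independent
    -- with a common mean
    (hemeas : ∀ k t, Measurable (e k t))
    (heindep : ∀ t, iIndepFun (fun k => e k t) P)
    (hemean : ∀ t, ∃ mbar : EuclideanSpace ℝ (Fin d), ∀ k, ∫ ω, e k t ω ∂P = mbar) :
    ∀ β₁ : ℝ, 0 < β₁ → β₁ < δ / (1 - δ) → ∀ t,
      (K : ℝ)⁻¹ * ∑ k, ∫ ω, ‖(K : ℝ)⁻¹ • (∑ j, e j t ω) - e k t ω‖ ^ 2 ∂P
        ≤ (((K : ℝ) - 1) / (K : ℝ))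
            * ((1 - δ) * (1 + 1 / β₁) / (1 - (1 - δ) * (1 + β₁)))
            * (ηmax ^ 2 * (M ^ 2 + σ ^ 2) / (1 - μ) ^ 2) := by
  intro β₁ hβ₁ hβ₁' t
  have hKne : (K:ℝ) ≠ 0 := Nat.cast_ne_zero.mpr (by omega)
  have hK0 : (0:ℝ) < (K:ℝ) := by positivity
  have hK1 : (1:ℝ) ≤ (K:ℝ) := by exact_mod_cast hK
  have h1μ : 0 < 1 - μ := by linarith
  have hδ' : 0 < 1 - δ := by linarith
  have hρ1 : (1 - δ) * (1 + β₁) < 1 := by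
    have h := (lt_div_iff₀ hδ').mp hβ₁'
    nlinarith
  have hρ0 : 0 < 1 - (1 - δ) * (1 + β₁) := by linarith
  have hηm : 0 < ηmax := lt_of_lt_of_le (hη0 0) (hηmax 0)
  have hG : (0:ℝ) ≤ M ^ 2 + σ ^ 2 := by positivity
  -- `MemLp` of the momentum and error sequences
  have hmL2 : ∀ k s, MemLp (m k s) 2 P := by
    intro k s
    induction s with
    | zero =>
        rw [show m k 0 = fun _ => (0 : EuclideanSpace ℝ (Fin d)) from funext (hm0 k)]
        exact memLp_const 0
    | succ s ih =>
        rw [show m k (s + 1) = fun ω => μ • m k s ω + g k s ω from funext (hm k s)]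
        exact (ih.const_smul μ).add (hgL2 k s)
  have hΔL2 : ∀ k s, MemLp (e k s) 2 P → MemLp (Δ k (s + 1)) 2 P := by
    intro k s ihe
    rw [show Δ k (s + 1) = fun ω => e k s ω + η s • m k (s + 1) ω from funext (hΔ k s)]
    exact ihe.add ((hmL2 k (s + 1)).const_smul (η s))
  have hesq_le : ∀ k s ω, ‖e k (s + 1) ω‖ ^ 2 ≤ (1 - δ) * ‖Δ k (s + 1) ω‖ ^ 2 := by
    intro k s ω
    rw [he k s ω, norm_sub_rev]
    exact hCo _
  have heL2 : ∀ k s, MemLp (e k s) 2 P := by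
    intro k s
    induction s with
    | zero =>
        rw [show e k 0 = fun _ => (0 : EuclideanSpace ℝ (Fin d)) from funext (he0 k)]
        exact memLp_const 0
    | succ s ih =>
        refine (hΔL2 k s ih).of_le (hemeas k (s + 1)).aestronglyMeasurable ?_
        refine Filter.Eventually.of_forall fun ω => ?_
        have h1 := hesq_le k s ω
        have h2 : ‖e k (s + 1) ω‖ ^ 2 ≤ ‖Δ k (s + 1) ω‖ ^ 2 := by
          nlinarith [sq_nonneg ‖Δ k (s + 1) ω‖]
        nlinarith [norm_nonneg (e k (s + 1) ω), norm_nonneg (Δ k (s + 1) ω)]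
  -- integral bound on the momentum
  have hmI : ∀ k s, ∫ ω, ‖m k s ω‖ ^ 2 ∂P ≤ (M ^ 2 + σ ^ 2) / (1 - μ) ^ 2 := by
    intro k s
    induction s with
    | zero =>
        simp only [hm0, norm_zero]
        rw [show (fun (_ : Ω) => (0:ℝ) ^ 2) = fun _ => (0:ℝ) by simp]
        rw [integral_const]
        simp
        positivity
    | succ s ih =>
        have hptw : ∀ ω, ‖m k (s + 1) ω‖ ^ 2
            ≤ μ * ‖m k s ω‖ ^ 2 + ‖g k s ω‖ ^ 2 / (1 - μ) := by
          intro ω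
          rw [hm k s ω]
          have h1 : ‖μ • m k s ω + g k s ω‖ ≤ μ * ‖m k s ω‖ + ‖g k s ω‖ := by
            refine (norm_add_le _ _).trans ?_
            rw [norm_smul, Real.norm_eq_abs, abs_of_nonneg hμ0]
          have h2 : ‖μ • m k s ω + g k s ω‖ ^ 2 ≤ (μ * ‖m k s ω‖ + ‖g k s ω‖) ^ 2 :=
            pow_le_pow_left₀ (norm_nonneg _) h1 2
          exact h2.trans (saef_mom_sq hμ0 hμ1)
        have hint : ∫ ω, ‖m k (s + 1) ω‖ ^ 2 ∂P
            ≤ ∫ ω, (μ * ‖m k s ω‖ ^ 2 + ‖g k s ω‖ ^ 2 / (1 - μ)) ∂P := by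
          refine integral_mono (saef_intsq (hmL2 k (s + 1))) ?_ hptw
          exact ((saef_intsq (hmL2 k s)).const_mul μ).add ((saef_intsq (hgL2 k s)).div_const _)
        rw [integral_add ((saef_intsq (hmL2 k s)).const_mul μ)
          ((saef_intsq (hgL2 k s)).div_const _), integral_const_mul, integral_div] at hint
        have hg' : (∫ ω, ‖g k s ω‖ ^ 2 ∂P) / (1 - μ) ≤ (M ^ 2 + σ ^ 2) / (1 - μ) := by
          apply div_le_div_of_nonneg_right (hgbound k s) h1μ.le
        have hμih : μ * ∫ ω, ‖m k s ω‖ ^ 2 ∂P ≤ μ * ((M ^ 2 + σ ^ 2) / (1 - μ) ^ 2) :=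
          mul_le_mul_of_nonneg_left ih hμ0
        have halg : μ * ((M ^ 2 + σ ^ 2) / (1 - μ) ^ 2) + (M ^ 2 + σ ^ 2) / (1 - μ)
            = (M ^ 2 + σ ^ 2) / (1 - μ) ^ 2 := by
          field_simp
          ring
        linarith
  -- integral bound on the error
  have heI : ∀ k s, ∫ ω, ‖e k s ω‖ ^ 2 ∂P
      ≤ (1 - δ) * (1 + 1 / β₁) / (1 - (1 - δ) * (1 + β₁))
          * (ηmax ^ 2 * (M ^ 2 + σ ^ 2) / (1 - μ) ^ 2) := by
    intro k s
    induction s with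
    | zero =>
        simp only [he0, norm_zero]
        rw [show (fun (_ : Ω) => (0:ℝ) ^ 2) = fun _ => (0:ℝ) by simp, integral_const]
        simp only [smul_eq_mul, mul_zero]
        positivity
    | succ s ih =>
        have hptw : ∀ ω, ‖e k (s + 1) ω‖ ^ 2
            ≤ (1 - δ) * (1 + β₁) * ‖e k s ω‖ ^ 2
              + (1 - δ) * (1 + 1 / β₁) * ((η s) ^ 2 * ‖m k (s + 1) ω‖ ^ 2) := by
          intro ω
          have h1 := hesq_le k s ω
          have h2 : ‖Δ k (s + 1) ω‖ ^ 2
              ≤ (1 + β₁) * ‖e k s ω‖ ^ 2 + (1 + 1 / β₁) * ((η s) ^ 2 * ‖m k (s + 1) ω‖ ^ 2) := by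
            rw [hΔ k s ω]
            have h3 := saef_norm_add_sq_young (e k s ω) ((η s) • m k (s + 1) ω) hβ₁
            have hsm : ‖(η s) • m k (s + 1) ω‖ ^ 2 = (η s) ^ 2 * ‖m k (s + 1) ω‖ ^ 2 := by
              rw [norm_smul, mul_pow, Real.norm_eq_abs, sq_abs]
            rw [hsm] at h3
            exact h3
          have h4 := mul_le_mul_of_nonneg_left h2 hδ'.le
          nlinarith [h4]
        have hintm : Integrable (fun ω => (η s) ^ 2 * ‖m k (s + 1) ω‖ ^ 2) P :=
          (saef_intsq (hmL2 k (s + 1))).const_mul _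
        have hrhs_int : Integrable (fun ω =>
            (1 - δ) * (1 + β₁) * ‖e k s ω‖ ^ 2
              + (1 - δ) * (1 + 1 / β₁) * ((η s) ^ 2 * ‖m k (s + 1) ω‖ ^ 2)) P :=
          ((saef_intsq (heL2 k s)).const_mul _).add (hintm.const_mul _)
        have hint : ∫ ω, ‖e k (s + 1) ω‖ ^ 2 ∂P
            ≤ ∫ ω, ((1 - δ) * (1 + β₁) * ‖e k s ω‖ ^ 2
              + (1 - δ) * (1 + 1 / β₁) * ((η s) ^ 2 * ‖m k (s + 1) ω‖ ^ 2)) ∂P :=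
          integral_mono (saef_intsq (heL2 k (s + 1))) hrhs_int hptw
        rw [integral_add ((saef_intsq (heL2 k s)).const_mul _) (hintm.const_mul _),
          integral_const_mul, integral_const_mul, integral_const_mul] at hint
        have hη2 : (η s) ^ 2 ≤ ηmax ^ 2 := pow_le_pow_left₀ (hη0 s).le (hηmax s) 2
        have hm2 : ∫ ω, ‖m k (s + 1) ω‖ ^ 2 ∂P ≤ (M ^ 2 + σ ^ 2) / (1 - μ) ^ 2 := hmI k (s + 1)
        have hm2' : (0:ℝ) ≤ ∫ ω, ‖m k (s + 1) ω‖ ^ 2 ∂P :=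
          integral_nonneg fun ω => sq_nonneg _
        have hterm2 : (1 - δ) * (1 + 1 / β₁) * ((η s) ^ 2 * ∫ ω, ‖m k (s + 1) ω‖ ^ 2 ∂P)
            ≤ (1 - δ) * (1 + 1 / β₁) * (ηmax ^ 2 * ((M ^ 2 + σ ^ 2) / (1 - μ) ^ 2)) := by
          apply mul_le_mul_of_nonneg_left _ (by positivity)
          apply mul_le_mul hη2 hm2 hm2' (by positivity)
        have hterm1 : (1 - δ) * (1 + β₁) * ∫ ω, ‖e k s ω‖ ^ 2 ∂P
            ≤ (1 - δ) * (1 + β₁) * ((1 - δ) * (1 + 1 / β₁) / (1 - (1 - δ) * (1 + β₁))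
                * (ηmax ^ 2 * (M ^ 2 + σ ^ 2) / (1 - μ) ^ 2)) :=
          mul_le_mul_of_nonneg_left ih (by positivity)
        have hxeq : (1 - δ) * (1 + 1 / β₁) * (ηmax ^ 2 * ((M ^ 2 + σ ^ 2) / (1 - μ) ^ 2))
            = (1 - δ) * (1 + 1 / β₁) * (ηmax ^ 2 * (M ^ 2 + σ ^ 2) / (1 - μ) ^ 2) := by
          ring
        have halg := saef_geom (r := (1 - δ) * (1 + β₁)) (b := (1 - δ) * (1 + 1 / β₁))
          (x := ηmax ^ 2 * (M ^ 2 + σ ^ 2) / (1 - μ) ^ 2) (ne_of_gt hρ0)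
        linarith
  -- the deviation bound at time t
  obtain ⟨mb, hmb⟩ := hemean t
  have hSL2 : MemLp (fun ω => ∑ j, e j t ω) 2 P :=
    memLp_finset_sum Finset.univ fun j _ => heL2 j t
  have hbarL2 : MemLp (fun ω => (K:ℝ)⁻¹ • ∑ j, e j t ω) 2 P := hSL2.const_smul (K:ℝ)⁻¹
  have hdev_int : ∀ k : Fin K,
      Integrable (fun ω => ‖(K:ℝ)⁻¹ • (∑ j, e j t ω) - e k t ω‖ ^ 2) P :=
    fun k => saef_intsq (hbarL2.sub (heL2 k t))
  have hesq_int : ∀ k : Fin K, Integrable (fun ω => ‖e k t ω‖ ^ 2) P :=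
    fun k => saef_intsq (heL2 k t)
  have hSsq_int : Integrable (fun ω => ‖∑ j, e j t ω‖ ^ 2) P := saef_intsq hSL2
  have hptw : ∀ ω : Ω, (∑ k, ‖(K:ℝ)⁻¹ • (∑ j, e j t ω) - e k t ω‖ ^ 2)
      = (∑ k, ‖e k t ω‖ ^ 2) - (K:ℝ)⁻¹ * ‖∑ j, e j t ω‖ ^ 2 := by
    intro ω
    rw [saef_sum_dev_sq hK (fun j => e j t ω)]
    have hb : ‖(K:ℝ)⁻¹ • ∑ j, e j t ω‖ ^ 2 = (K:ℝ)⁻¹ ^ 2 * ‖∑ j, e j t ω‖ ^ 2 := by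
      rw [norm_smul, mul_pow, Real.norm_eq_abs, sq_abs]
    rw [hb]
    have hq : (K:ℝ) * ((K:ℝ)⁻¹ ^ 2 * ‖∑ j, e j t ω‖ ^ 2)
        = (K:ℝ)⁻¹ * ‖∑ j, e j t ω‖ ^ 2 := by
      field_simp
    rw [hq]
  have hid : ∑ k, ∫ ω, ‖(K:ℝ)⁻¹ • (∑ j, e j t ω) - e k t ω‖ ^ 2 ∂P
      = (∑ k, ∫ ω, ‖e k t ω‖ ^ 2 ∂P) - (K:ℝ)⁻¹ * ∫ ω, ‖∑ j, e j t ω‖ ^ 2 ∂P := by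
    calc ∑ k, ∫ ω, ‖(K:ℝ)⁻¹ • (∑ j, e j t ω) - e k t ω‖ ^ 2 ∂P
        = ∫ ω, ∑ k, ‖(K:ℝ)⁻¹ • (∑ j, e j t ω) - e k t ω‖ ^ 2 ∂P :=
          (integral_finset_sum _ fun k _ => hdev_int k).symm
      _ = ∫ ω, ((∑ k, ‖e k t ω‖ ^ 2) - (K:ℝ)⁻¹ * ‖∑ j, e j t ω‖ ^ 2) ∂P :=
          integral_congr_ae (Filter.Eventually.of_forall hptw)
      _ = (∑ k, ∫ ω, ‖e k t ω‖ ^ 2 ∂P) - (K:ℝ)⁻¹ * ∫ ω, ‖∑ j, e j t ω‖ ^ 2 ∂P := by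
          rw [integral_sub (integrable_finset_sum _ fun k _ => hesq_int k)
            (hSsq_int.const_mul _), integral_finset_sum _ fun k _ => hesq_int k,
            integral_const_mul]
  -- independence: the cross terms are squares of the common mean
  have hproj : ∀ i : Fin d, Measurable (fun x : EuclideanSpace ℝ (Fin d) => x i) :=
    fun i => (EuclideanSpace.proj i : EuclideanSpace ℝ (Fin d) →L[ℝ] ℝ).measurable
  have heint1 : ∀ j : Fin K, Integrable (e j t) P := fun j => (heL2 j t).integrable one_le_two
  have hcoord_int : ∀ (j : Fin K) (i : Fin d), Integrable (fun ω => e j t ω i) P :=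
    fun j i =>
      (EuclideanSpace.proj i : EuclideanSpace ℝ (Fin d) →L[ℝ] ℝ).integrable_comp (heint1 j)
  have hcoord_eq : ∀ (j : Fin K) (i : Fin d), ∫ ω, e j t ω i ∂P = mb i := by
    intro j i
    have h2 : ∫ ω, e j t ω i ∂P
        = (EuclideanSpace.proj i : EuclideanSpace ℝ (Fin d) →L[ℝ] ℝ) (∫ ω, e j t ω ∂P) :=
      (EuclideanSpace.proj i : EuclideanSpace ℝ (Fin d) →L[ℝ] ℝ).integral_comp_comm (heint1 j)
    rw [h2, hmb j]
    rfl
  have hinner_int : ∀ j l : Fin K,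
      Integrable (fun ω => @inner ℝ _ _ (e j t ω) (e l t ω)) P := by
    intro j l
    have hms : AEStronglyMeasurable (fun ω => @inner ℝ _ _ (e j t ω) (e l t ω)) P :=
      AEStronglyMeasurable.inner (hemeas j t).aestronglyMeasurable
        (hemeas l t).aestronglyMeasurable
    refine Integrable.mono' (((hesq_int j).add (hesq_int l)).const_mul (1/2 : ℝ)) hms ?_
    refine Filter.Eventually.of_forall fun ω => ?_
    have h1 : |@inner ℝ _ _ (e j t ω) (e l t ω)| ≤ ‖e j t ω‖ * ‖e l t ω‖ :=
      abs_real_inner_le_norm _ _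
    rw [Real.norm_eq_abs]
    simp only [Pi.add_apply]
    nlinarith [sq_nonneg (‖e j t ω‖ - ‖e l t ω‖)]
  have hScalc : ∫ ω, ‖∑ j, e j t ω‖ ^ 2 ∂P
      = ∑ j, ∑ l, ∫ ω, @inner ℝ _ _ (e j t ω) (e l t ω) ∂P := by
    have hptw2 : ∀ ω : Ω, ‖∑ j, e j t ω‖ ^ 2
        = ∑ j, ∑ l, @inner ℝ _ _ (e j t ω) (e l t ω) := by
      intro ω
      rw [← real_inner_self_eq_norm_sq, sum_inner]
      exact Finset.sum_congr rfl fun j _ => inner_sum _ _ _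
    rw [integral_congr_ae (Filter.Eventually.of_forall hptw2),
      integral_finset_sum _ fun j _ => integrable_finset_sum _ fun l _ => hinner_int j l]
    exact Finset.sum_congr rfl fun j _ => integral_finset_sum _ fun l _ => hinner_int j l
  have hcross : ∀ j l : Fin K, j ≠ l →
      ∫ ω, @inner ℝ _ _ (e j t ω) (e l t ω) ∂P = ‖mb‖ ^ 2 := by
    intro j l hjl
    have hind : IndepFun (e j t) (e l t) P := (heindep t).indepFun hjl
    have hptw3 : ∀ ω : Ω, @inner ℝ _ _ (e j t ω) (e l t ω) = ∑ i, e j t ω i * e l t ω i := by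
      intro ω
      simp [PiLp.inner_apply, RCLike.inner_apply, conj_trivial]
      exact Finset.sum_congr rfl fun i _ => mul_comm _ _
    have hpint : ∀ i : Fin d, Integrable (fun ω => e j t ω i * e l t ω i) P := by
      intro i
      exact (hind.comp (hproj i) (hproj i)).integrable_mul (hcoord_int j i) (hcoord_int l i)
    have hco : ∀ i : Fin d, ∫ ω, e j t ω i * e l t ω i ∂P = mb i * mb i := by
      intro i
      have h1 : ∫ ω, e j t ω i * e l t ω i ∂P
          = (∫ ω, e j t ω i ∂P) * ∫ ω, e l t ω i ∂P :=
        IndepFun.integral_fun_mul_eq_mul_integral (hind.comp (hproj i) (hproj i))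
          ((hproj i).comp (hemeas j t)).aestronglyMeasurable
          ((hproj i).comp (hemeas l t)).aestronglyMeasurable
      rw [h1, hcoord_eq j i, hcoord_eq l i]
    rw [integral_congr_ae (Filter.Eventually.of_forall hptw3),
      integral_finset_sum _ fun i _ => hpint i,
      Finset.sum_congr rfl fun i _ => hco i, ← real_inner_self_eq_norm_sq]
    simp only [PiLp.inner_apply, RCLike.inner_apply, conj_trivial]
  have hdiag : ∀ j : Fin K,
      ∫ ω, @inner ℝ _ _ (e j t ω) (e j t ω) ∂P = ∫ ω, ‖e j t ω‖ ^ 2 ∂P :=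
    fun j => integral_congr_ae
      (Filter.Eventually.of_forall fun ω => real_inner_self_eq_norm_sq _)
  have hSge : (∑ k, ∫ ω, ‖e k t ω‖ ^ 2 ∂P) ≤ ∫ ω, ‖∑ j, e j t ω‖ ^ 2 ∂P := by
    rw [hScalc]
    refine Finset.sum_le_sum fun j _ => ?_
    rw [← Finset.add_sum_erase _ _ (Finset.mem_univ j), hdiag j]
    have hrest : 0 ≤ ∑ l ∈ Finset.univ.erase j,
        ∫ ω, @inner ℝ _ _ (e j t ω) (e l t ω) ∂P := by
      refine Finset.sum_nonneg fun l hl => ?_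
      rw [hcross j l (Finset.ne_of_mem_erase hl).symm]
      positivity
    linarith
  -- final assembly
  have hCnn : (0:ℝ) ≤ (1 - δ) * (1 + 1 / β₁) / (1 - (1 - δ) * (1 + β₁))
      * (ηmax ^ 2 * (M ^ 2 + σ ^ 2) / (1 - μ) ^ 2) := by
    apply mul_nonneg (div_nonneg (by positivity) hρ0.le) (by positivity)
  have hsumE : ∑ k, ∫ ω, ‖e k t ω‖ ^ 2 ∂P
      ≤ (K:ℝ) * ((1 - δ) * (1 + 1 / β₁) / (1 - (1 - δ) * (1 + β₁))
          * (ηmax ^ 2 * (M ^ 2 + σ ^ 2) / (1 - μ) ^ 2)) := by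
    calc ∑ k, ∫ ω, ‖e k t ω‖ ^ 2 ∂P
        ≤ ∑ _k : Fin K, ((1 - δ) * (1 + 1 / β₁) / (1 - (1 - δ) * (1 + β₁))
            * (ηmax ^ 2 * (M ^ 2 + σ ^ 2) / (1 - μ) ^ 2)) :=
          Finset.sum_le_sum fun k _ => heI k t
      _ = _ := by
          simp [Finset.sum_const, Finset.card_univ, nsmul_eq_mul]
  have hKinv : (K:ℝ)⁻¹ ≤ 1 := by
    have h := mul_le_mul_of_nonneg_left hK1 (le_of_lt (inv_pos.mpr hK0))
    rw [mul_one, inv_mul_cancel₀ hKne] at h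
    exact h
  have h2 : (0:ℝ) ≤ 1 - (K:ℝ)⁻¹ := by linarith
  have hmain : ∑ k, ∫ ω, ‖(K:ℝ)⁻¹ • (∑ j, e j t ω) - e k t ω‖ ^ 2 ∂P
      ≤ ((K:ℝ) - 1) * ((1 - δ) * (1 + 1 / β₁) / (1 - (1 - δ) * (1 + β₁))
          * (ηmax ^ 2 * (M ^ 2 + σ ^ 2) / (1 - μ) ^ 2)) := by
    rw [hid]
    have h1 : (K:ℝ)⁻¹ * (∑ k, ∫ ω, ‖e k t ω‖ ^ 2 ∂P)
        ≤ (K:ℝ)⁻¹ * ∫ ω, ‖∑ j, e j t ω‖ ^ 2 ∂P :=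
      mul_le_mul_of_nonneg_left hSge (by positivity)
    have h3 : (1 - (K:ℝ)⁻¹) * (∑ k, ∫ ω, ‖e k t ω‖ ^ 2 ∂P)
        ≤ (1 - (K:ℝ)⁻¹) * ((K:ℝ) * ((1 - δ) * (1 + 1 / β₁) / (1 - (1 - δ) * (1 + β₁))
            * (ηmax ^ 2 * (M ^ 2 + σ ^ 2) / (1 - μ) ^ 2))) :=
      mul_le_mul_of_nonneg_left hsumE h2
    have h4 : (1 - (K:ℝ)⁻¹) * ((K:ℝ) * ((1 - δ) * (1 + 1 / β₁) / (1 - (1 - δ) * (1 + β₁))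
            * (ηmax ^ 2 * (M ^ 2 + σ ^ 2) / (1 - μ) ^ 2)))
        = ((K:ℝ) - 1) * ((1 - δ) * (1 + 1 / β₁) / (1 - (1 - δ) * (1 + β₁))
            * (ηmax ^ 2 * (M ^ 2 + σ ^ 2) / (1 - μ) ^ 2)) := by
      have hx : (1 - (K:ℝ)⁻¹) * (K:ℝ) = (K:ℝ) - 1 := by
        rw [sub_mul, one_mul, inv_mul_cancel₀ hKne]
      rw [← mul_assoc, hx]
    rw [h4] at h3
    linarith
  calc (K:ℝ)⁻¹ * ∑ k, ∫ ω, ‖(K:ℝ)⁻¹ • (∑ j, e j t ω) - e k t ω‖ ^ 2 ∂P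
      ≤ (K:ℝ)⁻¹ * (((K:ℝ) - 1) * ((1 - δ) * (1 + 1 / β₁) / (1 - (1 - δ) * (1 + β₁))
          * (ηmax ^ 2 * (M ^ 2 + σ ^ 2) / (1 - μ) ^ 2))) :=
        mul_le_mul_of_nonneg_left hmain (by positivity)
    _ = (((K:ℝ) - 1) / (K:ℝ)) * ((1 - δ) * (1 + 1 / β₁) / (1 - (1 - δ) * (1 + β₁)))
          * (ηmax ^ 2 * (M ^ 2 + σ ^ 2) / (1 - μ) ^ 2) := by
        field_simp
end

section
/- Under the SAEF-SGD-with-momentum dynamics with learning rates 0 < η_t ≤ η_max, for every β₁ with 0 < β₁ < δ/(1−δ) and every t ≥ 0, the server error satisfies E‖e_{t+1}‖² ≤ (1−δ)/(1−√(1−δ))² · [2(2−δ)(1 + 1/β₁)/(1 − (1−δ)(1+β₁))] · η_max²(M² + σ²)/(1−μ)². -/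
open MeasureTheory


private lemma young_sq (a b c : ℝ) (hc : 0 < c) :
    (a + b) ^ 2 ≤ (1 + c) * a ^ 2 + (1 + 1 / c) * b ^ 2 := by
  have h1 : (1 + 1 / c) * b ^ 2 = (c + 1) * b ^ 2 / c := by field_simp
  have h2 : (a + b) ^ 2 - (1 + c) * a ^ 2 ≤ (c + 1) * b ^ 2 / c := by
    rw [le_div_iff₀ hc]; nlinarith [sq_nonneg (c * a - b)]
  rw [h1]; linarith

private lemma conv_sq (a b μ : ℝ) (hμ0 : 0 ≤ μ) (hμ1 : μ < 1) :
    (μ * a + b) ^ 2 ≤ μ * a ^ 2 + b ^ 2 / (1 - μ) := by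
  have h1 : (0:ℝ) < 1 - μ := by linarith
  have h2 : (μ * a + b) ^ 2 - μ * a ^ 2 ≤ b ^ 2 / (1 - μ) := by
    rw [le_div_iff₀ h1]; nlinarith [mul_nonneg hμ0 (sq_nonneg ((1 - μ) * a - b))]
  linarith

set_option maxHeartbeats 1000000 in
/-- Bound on the server-side compression error of SAEF-SGD with momentum under
double-way compression: for every `β₁ ∈ (0, δ/(1−δ))` and every `t`,
`E‖e_{t+1}‖² ≤ (1−δ)/(1−√(1−δ))² · [2(2−δ)(1+1/β₁)/(1−(1−δ)(1+β₁))]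
              · η_max²(M²+σ²)/(1−μ)²`. -/
theorem server_error_second_moment_bound
    {Ω : Type*} [MeasurableSpace Ω] (P : Measure Ω) [IsProbabilityMeasure P]
    {d K : ℕ} (hK : 1 ≤ K)
    (μ M σ δ ηmax : ℝ) (hμ0 : 0 ≤ μ) (hμ1 : μ < 1)
    (hM : 0 ≤ M) (hσ : 0 ≤ σ) (hδ0 : 0 < δ) (hδ1 : δ < 1)
    (Co : EuclideanSpace ℝ (Fin d) → EuclideanSpace ℝ (Fin d))
    (hCo : ∀ v, ‖Co v - v‖ ^ 2 ≤ (1 - δ) * ‖v‖ ^ 2)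
    (η : ℕ → ℝ) (hη0 : ∀ t, 0 < η t) (hηmax : ∀ t, η t ≤ ηmax)
    (g m e : Fin K → ℕ → Ω → EuclideanSpace ℝ (Fin d))
    (esrv : ℕ → Ω → EuclideanSpace ℝ (Fin d))
    (hgL2 : ∀ k t, MemLp (g k t) 2 P)
    (hgbound : ∀ k t, ∫ ω, ‖g k t ω‖ ^ 2 ∂P ≤ M ^ 2 + σ ^ 2)
    (hm0 : ∀ k ω, m k 0 ω = 0) (he0 : ∀ k ω, e k 0 ω = 0)
    (hesrv0 : ∀ ω, esrv 0 ω = 0)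
    (hm : ∀ k t ω, m k (t + 1) ω = μ • m k t ω + g k t ω)
    (Δ : Fin K → ℕ → Ω → EuclideanSpace ℝ (Fin d))
    (hΔ : ∀ k t ω, Δ k (t + 1) ω = e k t ω + η t • m k (t + 1) ω)
    (he : ∀ k t ω, e k (t + 1) ω = Δ k (t + 1) ω - Co (Δ k (t + 1) ω))
    (Δsrv : ℕ → Ω → EuclideanSpace ℝ (Fin d))
    (hΔsrv : ∀ t ω, Δsrv (t + 1) ω = esrv t ω + (K : ℝ)⁻¹ • ∑ k, Co (Δ k (t + 1) ω))
    (hesrv : ∀ t ω, esrv (t + 1) ω = Δsrv (t + 1) ω - Co (Δsrv (t + 1) ω)) :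
    ∀ β₁ : ℝ, 0 < β₁ → β₁ < δ / (1 - δ) → ∀ t,
      ∫ ω, ‖esrv (t + 1) ω‖ ^ 2 ∂P
        ≤ ((1 - δ) / (1 - Real.sqrt (1 - δ)) ^ 2)
            * (2 * (2 - δ) * (1 + 1 / β₁) / (1 - (1 - δ) * (1 + β₁)))
            * (ηmax ^ 2 * (M ^ 2 + σ ^ 2) / (1 - μ) ^ 2) := by
  intro β₁ hβ0 hβδ t
  -- basic positivity facts
  have hδ' : (0:ℝ) < 1 - δ := by linarith
  have hμ' : (0:ℝ) < 1 - μ := by linarith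
  have hβ1 : (0:ℝ) < 1 + 1 / β₁ := by
    have := one_div_pos.mpr hβ0; linarith
  have hβ2 : (0:ℝ) < 1 + β₁ := by linarith
  have hηm : (0:ℝ) < ηmax := lt_of_lt_of_le (hη0 0) (hηmax 0)
  set ρ : ℝ := (1 - δ) * (1 + β₁) with hρ
  have hρ0 : 0 ≤ ρ := mul_nonneg hδ'.le hβ2.le
  have hρ1 : ρ < 1 := by
    have h := (lt_div_iff₀ hδ').mp hβδ
    nlinarith
  have hρ' : (0:ℝ) < 1 - ρ := by linarith
  set s : ℝ := Real.sqrt (1 - δ) with hsdef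
  have hs2 : s ^ 2 = 1 - δ := Real.sq_sqrt hδ'.le
  have hs0 : 0 < s := Real.sqrt_pos.mpr hδ'
  have hs1 : s < 1 := by nlinarith
  have hs' : (0:ℝ) < 1 - s := by linarith
  set S : ℝ := M ^ 2 + σ ^ 2 with hS
  have hS0 : 0 ≤ S := by positivity
  set D : ℝ := S / (1 - μ) ^ 2 with hD
  have hD0 : 0 ≤ D := by positivity
  -- integrability of the gradients' squared norms
  have hgint : ∀ k t, Integrable (fun ω => ‖g k t ω‖ ^ 2) P := by
    intro k t
    have h := (hgL2 k t).integrable_norm_rpow (by norm_num) (by norm_num)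
    simpa [ENNReal.toReal_ofNat, Real.rpow_natCast] using h
  -- Step 1: domination of the momentum
  have hmom : ∀ k t, ∃ F : Ω → ℝ, Integrable F P ∧ (∀ ω, ‖m k t ω‖ ^ 2 ≤ F ω) ∧
      ∫ ω, F ω ∂P ≤ D := by
    intro k t
    induction t with
    | zero =>
        exact ⟨fun _ => 0, integrable_zero _ _ _, fun ω => by simp [hm0], by simp [hD0]⟩
    | succ t ih =>
        obtain ⟨F, hFi, hFp, hFb⟩ := ih
        refine ⟨fun ω => μ * F ω + ‖g k t ω‖ ^ 2 / (1 - μ), ?_, ?_, ?_⟩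
        · exact (hFi.const_mul μ).add ((hgint k t).div_const _)
        · intro ω
          have h1 : ‖m k (t + 1) ω‖ ≤ μ * ‖m k t ω‖ + ‖g k t ω‖ := by
            rw [hm]
            refine (norm_add_le _ _).trans ?_
            rw [norm_smul, Real.norm_of_nonneg hμ0]
          have h2 : ‖m k (t + 1) ω‖ ^ 2 ≤ (μ * ‖m k t ω‖ + ‖g k t ω‖) ^ 2 :=
            pow_le_pow_left₀ (norm_nonneg _) h1 2
          have h3 := conv_sq ‖m k t ω‖ ‖g k t ω‖ μ hμ0 hμ1
          have h4 : μ * ‖m k t ω‖ ^ 2 ≤ μ * F ω :=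
            mul_le_mul_of_nonneg_left (hFp ω) hμ0
          linarith
        · rw [integral_add (hFi.const_mul μ) ((hgint k t).div_const _),
            integral_const_mul, integral_div]
          have h5 : μ * ∫ ω, F ω ∂P ≤ μ * D := mul_le_mul_of_nonneg_left hFb hμ0
          have h6 : (∫ ω, ‖g k t ω‖ ^ 2 ∂P) / (1 - μ) ≤ S / (1 - μ) :=
            (div_le_div_iff_of_pos_right hμ').mpr (hgbound k t)
          have h7 : μ * D + S / (1 - μ) = D := by
            rw [hD]; field_simp; ring
          linarith
  -- Step 2: domination of the worker errors
  have herr : ∀ k t, ∃ F : Ω → ℝ, Integrable F P ∧ (∀ ω, ‖e k t ω‖ ^ 2 ≤ F ω) ∧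
      ∫ ω, F ω ∂P ≤ (1 - δ) * ((1 + 1 / β₁) * (ηmax ^ 2 * D)) / (1 - ρ) := by
    intro k t
    set Q : ℝ := (1 - δ) * ((1 + 1 / β₁) * (ηmax ^ 2 * D)) with hQ
    have hQ0 : 0 ≤ Q := by
      refine mul_nonneg hδ'.le (mul_nonneg hβ1.le (mul_nonneg (by positivity) hD0))
    induction t with
    | zero =>
        exact ⟨fun _ => 0, integrable_zero _ _ _, fun ω => by simp [he0],
          by simp [div_nonneg hQ0 hρ'.le]⟩
    | succ t ih =>
        obtain ⟨F, hFi, hFp, hFb⟩ := ih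
        obtain ⟨G, hGi, hGp, hGb⟩ := hmom k (t + 1)
        refine ⟨fun ω => (1 - δ) * ((1 + β₁) * F ω + (1 + 1 / β₁) * (ηmax ^ 2 * G ω)),
          ?_, ?_, ?_⟩
        · exact (((hFi.const_mul _).add ((hGi.const_mul _).const_mul _)).const_mul _)
        · intro ω
          have p1 : ‖e k (t + 1) ω‖ ^ 2 ≤ (1 - δ) * ‖Δ k (t + 1) ω‖ ^ 2 := by
            rw [he, norm_sub_rev]; exact hCo _
          have p2 : ‖Δ k (t + 1) ω‖ ≤ ‖e k t ω‖ + η t * ‖m k (t + 1) ω‖ := by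
            rw [hΔ]
            refine (norm_add_le _ _).trans ?_
            rw [norm_smul, Real.norm_of_nonneg (hη0 t).le]
          have p3 : ‖Δ k (t + 1) ω‖ ^ 2 ≤ (‖e k t ω‖ + η t * ‖m k (t + 1) ω‖) ^ 2 :=
            pow_le_pow_left₀ (norm_nonneg _) p2 2
          have p4 := young_sq ‖e k t ω‖ (η t * ‖m k (t + 1) ω‖) β₁ hβ0
          have q1 : (η t * ‖m k (t + 1) ω‖) ^ 2 ≤ ηmax ^ 2 * G ω := by
            have e1 : (η t * ‖m k (t + 1) ω‖) ^ 2 = η t ^ 2 * ‖m k (t + 1) ω‖ ^ 2 := by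
              ring
            have e2 : η t ^ 2 ≤ ηmax ^ 2 := pow_le_pow_left₀ (hη0 t).le (hηmax t) 2
            calc (η t * ‖m k (t + 1) ω‖) ^ 2
                = η t ^ 2 * ‖m k (t + 1) ω‖ ^ 2 := e1
              _ ≤ ηmax ^ 2 * ‖m k (t + 1) ω‖ ^ 2 :=
                  mul_le_mul_of_nonneg_right e2 (sq_nonneg _)
              _ ≤ ηmax ^ 2 * G ω := mul_le_mul_of_nonneg_left (hGp ω) (by positivity)
          have p5 : ‖Δ k (t + 1) ω‖ ^ 2
              ≤ (1 + β₁) * F ω + (1 + 1 / β₁) * (ηmax ^ 2 * G ω) := by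
            have h4 : (1 + β₁) * ‖e k t ω‖ ^ 2 ≤ (1 + β₁) * F ω :=
              mul_le_mul_of_nonneg_left (hFp ω) hβ2.le
            have h5 : (1 + 1 / β₁) * (η t * ‖m k (t + 1) ω‖) ^ 2
                ≤ (1 + 1 / β₁) * (ηmax ^ 2 * G ω) :=
              mul_le_mul_of_nonneg_left q1 hβ1.le
            linarith
          exact p1.trans (mul_le_mul_of_nonneg_left p5 hδ'.le)
        · rw [integral_const_mul,
            integral_add (hFi.const_mul _) ((hGi.const_mul _).const_mul _),
            integral_const_mul, integral_const_mul, integral_const_mul]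
          have h4 : (1 + β₁) * ∫ ω, F ω ∂P ≤ (1 + β₁) * (Q / (1 - ρ)) :=
            mul_le_mul_of_nonneg_left hFb hβ2.le
          have h5 : (1 + 1 / β₁) * (ηmax ^ 2 * ∫ ω, G ω ∂P)
              ≤ (1 + 1 / β₁) * (ηmax ^ 2 * D) :=
            mul_le_mul_of_nonneg_left
              (mul_le_mul_of_nonneg_left hGb (by positivity)) hβ1.le
          have h6 : (1 - δ) * ((1 + β₁) * (Q / (1 - ρ)) + (1 + 1 / β₁) * (ηmax ^ 2 * D))
              = Q / (1 - ρ) := by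
            rw [hQ, hρ]; field_simp [show (1:ℝ) - (1 - δ) * (1 + β₁) ≠ 0 from hρ'.ne']; ring
          have h7 : (1 - δ) * ((1 + β₁) * ∫ ω, F ω ∂P
                + (1 + 1 / β₁) * (ηmax ^ 2 * ∫ ω, G ω ∂P))
              ≤ (1 - δ) * ((1 + β₁) * (Q / (1 - ρ)) + (1 + 1 / β₁) * (ηmax ^ 2 * D)) :=
            mul_le_mul_of_nonneg_left (by linarith) hδ'.le
          linarith
  -- Step 3: domination of the compressed worker increments
  have hCdom : ∀ k t, ∃ F : Ω → ℝ, Integrable F P ∧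
      (∀ ω, ‖Co (Δ k (t + 1) ω)‖ ^ 2 ≤ F ω) ∧
      ∫ ω, F ω ∂P ≤ 2 * (2 - δ) * ((1 + 1 / β₁) * (ηmax ^ 2 * D) / (1 - ρ)) := by
    intro k t
    obtain ⟨F, hFi, hFp, hFb⟩ := herr k t
    obtain ⟨G, hGi, hGp, hGb⟩ := hmom k (t + 1)
    refine ⟨fun ω => 2 * (2 - δ) * ((1 + β₁) * F ω + (1 + 1 / β₁) * (ηmax ^ 2 * G ω)),
      ?_, ?_, ?_⟩
    · exact (((hFi.const_mul _).add ((hGi.const_mul _).const_mul _)).const_mul _)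
    · intro ω
      -- ‖Co v‖² ≤ 2(2-δ)‖v‖²
      have c1 : ‖Co (Δ k (t + 1) ω)‖ ≤ ‖Co (Δ k (t + 1) ω) - Δ k (t + 1) ω‖
          + ‖Δ k (t + 1) ω‖ := by
        simpa using norm_add_le (Co (Δ k (t + 1) ω) - Δ k (t + 1) ω) (Δ k (t + 1) ω)
      have c2 : ‖Co (Δ k (t + 1) ω)‖ ^ 2
          ≤ (‖Co (Δ k (t + 1) ω) - Δ k (t + 1) ω‖ + ‖Δ k (t + 1) ω‖) ^ 2 :=
        pow_le_pow_left₀ (norm_nonneg _) c1 2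
      have c3 := young_sq ‖Co (Δ k (t + 1) ω) - Δ k (t + 1) ω‖ ‖Δ k (t + 1) ω‖ 1
        one_pos
      have c4 := hCo (Δ k (t + 1) ω)
      have c5 : ‖Co (Δ k (t + 1) ω)‖ ^ 2 ≤ 2 * (2 - δ) * ‖Δ k (t + 1) ω‖ ^ 2 := by
        norm_num at c3
        have c6 : 2 * ((1 - δ) * ‖Δ k (t + 1) ω‖ ^ 2) + 2 * ‖Δ k (t + 1) ω‖ ^ 2
            = 2 * (2 - δ) * ‖Δ k (t + 1) ω‖ ^ 2 := by ring
        linarith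
      -- ‖Δ‖² ≤ (1+β₁) F + (1+1/β₁) ηmax² G
      have p2 : ‖Δ k (t + 1) ω‖ ≤ ‖e k t ω‖ + η t * ‖m k (t + 1) ω‖ := by
        rw [hΔ]
        refine (norm_add_le _ _).trans ?_
        rw [norm_smul, Real.norm_of_nonneg (hη0 t).le]
      have p3 : ‖Δ k (t + 1) ω‖ ^ 2 ≤ (‖e k t ω‖ + η t * ‖m k (t + 1) ω‖) ^ 2 :=
        pow_le_pow_left₀ (norm_nonneg _) p2 2
      have p4 := young_sq ‖e k t ω‖ (η t * ‖m k (t + 1) ω‖) β₁ hβ0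
      have q1 : (η t * ‖m k (t + 1) ω‖) ^ 2 ≤ ηmax ^ 2 * G ω := by
        have e2 : η t ^ 2 ≤ ηmax ^ 2 := pow_le_pow_left₀ (hη0 t).le (hηmax t) 2
        calc (η t * ‖m k (t + 1) ω‖) ^ 2
            = η t ^ 2 * ‖m k (t + 1) ω‖ ^ 2 := by ring
          _ ≤ ηmax ^ 2 * ‖m k (t + 1) ω‖ ^ 2 :=
              mul_le_mul_of_nonneg_right e2 (sq_nonneg _)
          _ ≤ ηmax ^ 2 * G ω := mul_le_mul_of_nonneg_left (hGp ω) (by positivity)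
      have p5 : ‖Δ k (t + 1) ω‖ ^ 2
          ≤ (1 + β₁) * F ω + (1 + 1 / β₁) * (ηmax ^ 2 * G ω) := by
        have h4 : (1 + β₁) * ‖e k t ω‖ ^ 2 ≤ (1 + β₁) * F ω :=
          mul_le_mul_of_nonneg_left (hFp ω) hβ2.le
        have h5 : (1 + 1 / β₁) * (η t * ‖m k (t + 1) ω‖) ^ 2
            ≤ (1 + 1 / β₁) * (ηmax ^ 2 * G ω) :=
          mul_le_mul_of_nonneg_left q1 hβ1.le
        linarith
      calc ‖Co (Δ k (t + 1) ω)‖ ^ 2 ≤ 2 * (2 - δ) * ‖Δ k (t + 1) ω‖ ^ 2 := c5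
        _ ≤ 2 * (2 - δ) * ((1 + β₁) * F ω + (1 + 1 / β₁) * (ηmax ^ 2 * G ω)) :=
            mul_le_mul_of_nonneg_left p5 (by linarith)
    · rw [integral_const_mul,
        integral_add (hFi.const_mul _) ((hGi.const_mul _).const_mul _),
        integral_const_mul, integral_const_mul, integral_const_mul]
      have h4 : (1 + β₁) * ∫ ω, F ω ∂P
          ≤ (1 + β₁) * ((1 - δ) * ((1 + 1 / β₁) * (ηmax ^ 2 * D)) / (1 - ρ)) :=
        mul_le_mul_of_nonneg_left hFb hβ2.le
      have h5 : (1 + 1 / β₁) * (ηmax ^ 2 * ∫ ω, G ω ∂P)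
          ≤ (1 + 1 / β₁) * (ηmax ^ 2 * D) :=
        mul_le_mul_of_nonneg_left
          (mul_le_mul_of_nonneg_left hGb (by positivity)) hβ1.le
      have h6 : 2 * (2 - δ) *
            ((1 + β₁) * ((1 - δ) * ((1 + 1 / β₁) * (ηmax ^ 2 * D)) / (1 - ρ))
              + (1 + 1 / β₁) * (ηmax ^ 2 * D))
          = 2 * (2 - δ) * ((1 + 1 / β₁) * (ηmax ^ 2 * D) / (1 - ρ)) := by
        have hx : (1 - ρ) * (1 - ρ)⁻¹ = 1 := mul_inv_cancel₀ hρ'.ne'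
        linear_combination (-(2 * (2 - δ) * ((1 + 1 / β₁) * (ηmax ^ 2 * D)))) * hx
          + (-(2 * (2 - δ) * ((1 + 1 / β₁) * (ηmax ^ 2 * D)) * (1 - ρ)⁻¹)) * hρ
      have h7 : 2 * (2 - δ) * ((1 + β₁) * ∫ ω, F ω ∂P
            + (1 + 1 / β₁) * (ηmax ^ 2 * ∫ ω, G ω ∂P))
          ≤ 2 * (2 - δ) *
            ((1 + β₁) * ((1 - δ) * ((1 + 1 / β₁) * (ηmax ^ 2 * D)) / (1 - ρ))
              + (1 + 1 / β₁) * (ηmax ^ 2 * D)) :=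
        mul_le_mul_of_nonneg_left (by linarith) (by linarith)
      linarith
  -- the uniform bound for the averaged compressed increments
  set W : ℝ := 2 * (2 - δ) * ((1 + 1 / β₁) * (ηmax ^ 2 * D) / (1 - ρ)) with hW
  have hW0 : 0 ≤ W := by
    have : 0 ≤ (1 + 1 / β₁) * (ηmax ^ 2 * D) / (1 - ρ) := by
      exact div_nonneg (mul_nonneg hβ1.le (mul_nonneg (by positivity) hD0)) hρ'.le
    nlinarith
  -- Step 4: domination of the averaged compressed increments
  choose FC hFCi hFCp hFCb using hCdom
  have havg : ∀ t, ∃ F : Ω → ℝ, Integrable F P ∧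
      (∀ ω, ‖(K : ℝ)⁻¹ • ∑ k, Co (Δ k (t + 1) ω)‖ ^ 2 ≤ F ω) ∧
      ∫ ω, F ω ∂P ≤ W := by
    intro t
    have hK0 : (0:ℝ) < (K : ℝ) := by exact_mod_cast hK
    refine ⟨fun ω => (K : ℝ)⁻¹ * ∑ k, FC k t ω, ?_, ?_, ?_⟩
    · exact (integrable_finset_sum _ fun k _ => hFCi k t).const_mul _
    · intro ω
      have a1 : ‖(K : ℝ)⁻¹ • ∑ k, Co (Δ k (t + 1) ω)‖ ^ 2
          = (K : ℝ)⁻¹ ^ 2 * ‖∑ k, Co (Δ k (t + 1) ω)‖ ^ 2 := by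
        rw [norm_smul, Real.norm_of_nonneg (by positivity)]; ring
      have a2 : ‖∑ k, Co (Δ k (t + 1) ω)‖ ≤ ∑ k, ‖Co (Δ k (t + 1) ω)‖ :=
        norm_sum_le _ _
      have a3 : ‖∑ k, Co (Δ k (t + 1) ω)‖ ^ 2
          ≤ (∑ k, ‖Co (Δ k (t + 1) ω)‖) ^ 2 :=
        pow_le_pow_left₀ (norm_nonneg _) a2 2
      have a4 : (∑ k, ‖Co (Δ k (t + 1) ω)‖) ^ 2
          ≤ (K : ℝ) * ∑ k, ‖Co (Δ k (t + 1) ω)‖ ^ 2 := by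
        have := sq_sum_le_card_mul_sum_sq (s := (Finset.univ : Finset (Fin K)))
          (f := fun k => ‖Co (Δ k (t + 1) ω)‖)
        simpa using this
      have a5 : ∑ k, ‖Co (Δ k (t + 1) ω)‖ ^ 2 ≤ ∑ k, FC k t ω :=
        Finset.sum_le_sum fun k _ => hFCp k t ω
      calc ‖(K : ℝ)⁻¹ • ∑ k, Co (Δ k (t + 1) ω)‖ ^ 2
          = (K : ℝ)⁻¹ ^ 2 * ‖∑ k, Co (Δ k (t + 1) ω)‖ ^ 2 := a1
        _ ≤ (K : ℝ)⁻¹ ^ 2 * ((K : ℝ) * ∑ k, FC k t ω) := by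
            have : ‖∑ k, Co (Δ k (t + 1) ω)‖ ^ 2 ≤ (K : ℝ) * ∑ k, FC k t ω := by
              refine a3.trans (a4.trans ?_)
              exact mul_le_mul_of_nonneg_left a5 hK0.le
            exact mul_le_mul_of_nonneg_left this (by positivity)
        _ = (K : ℝ)⁻¹ * ∑ k, FC k t ω := by
            field_simp
    · rw [integral_const_mul, integral_finset_sum _ fun k _ => hFCi k t]
      have a6 : ∑ k, ∫ ω, FC k t ω ∂P ≤ ∑ _k : Fin K, W :=
        Finset.sum_le_sum fun k _ => hFCb k t
      have a7 : ∑ _k : Fin K, W = (K : ℝ) * W := by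
        simp [Finset.sum_const, mul_comm]
      have a8 : (K : ℝ)⁻¹ * ∑ k, ∫ ω, FC k t ω ∂P ≤ (K : ℝ)⁻¹ * ((K : ℝ) * W) :=
        mul_le_mul_of_nonneg_left (by rw [← a7]; exact a6) (by positivity)
      have a9 : (K : ℝ)⁻¹ * ((K : ℝ) * W) = W := by
        field_simp
      linarith
  -- Step 5: domination of the server error
  have hsrv : ∀ t, ∃ F : Ω → ℝ, Integrable F P ∧ (∀ ω, ‖esrv t ω‖ ^ 2 ≤ F ω) ∧
      ∫ ω, F ω ∂P ≤ (1 - δ) / (1 - s) ^ 2 * W := by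
    intro t
    have hWs0 : 0 ≤ (1 - δ) / (1 - s) ^ 2 * W := by
      exact mul_nonneg (div_nonneg hδ'.le (by positivity)) hW0
    induction t with
    | zero =>
        exact ⟨fun _ => 0, integrable_zero _ _ _, fun ω => by simp [hesrv0],
          by simpa using hWs0⟩
    | succ t ih =>
        obtain ⟨F, hFi, hFp, hFb⟩ := ih
        obtain ⟨G, hGi, hGp, hGb⟩ := havg t
        refine ⟨fun ω => s * F ω + (1 - δ) / (1 - s) * G ω, ?_, ?_, ?_⟩
        · exact (hFi.const_mul _).add (hGi.const_mul _)
        · intro ω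
          set c : ℝ := (1 - s) / s with hc
          have hc0 : 0 < c := div_pos hs' hs0
          have p1 : ‖esrv (t + 1) ω‖ ^ 2 ≤ (1 - δ) * ‖Δsrv (t + 1) ω‖ ^ 2 := by
            rw [hesrv, norm_sub_rev]; exact hCo _
          have p2 : ‖Δsrv (t + 1) ω‖
              ≤ ‖esrv t ω‖ + ‖(K : ℝ)⁻¹ • ∑ k, Co (Δ k (t + 1) ω)‖ := by
            rw [hΔsrv]; exact norm_add_le _ _
          have p3 : ‖Δsrv (t + 1) ω‖ ^ 2
              ≤ (‖esrv t ω‖ + ‖(K : ℝ)⁻¹ • ∑ k, Co (Δ k (t + 1) ω)‖) ^ 2 :=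
            pow_le_pow_left₀ (norm_nonneg _) p2 2
          have p4 := young_sq ‖esrv t ω‖ ‖(K : ℝ)⁻¹ • ∑ k, Co (Δ k (t + 1) ω)‖ c hc0
          have hcoef : ∀ x y : ℝ,
              (1 - δ) * ((1 + c) * x + (1 + 1 / c) * y)
                = s * x + (1 - δ) / (1 - s) * y := by
            intro x y
            rw [hc, ← hs2]
            field_simp
            ring
          have p5 : ‖esrv (t + 1) ω‖ ^ 2
              ≤ s * ‖esrv t ω‖ ^ 2
                + (1 - δ) / (1 - s) * ‖(K : ℝ)⁻¹ • ∑ k, Co (Δ k (t + 1) ω)‖ ^ 2 := by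
            rw [← hcoef]
            refine p1.trans (mul_le_mul_of_nonneg_left ?_ hδ'.le)
            linarith
          have p6 : s * ‖esrv t ω‖ ^ 2 ≤ s * F ω :=
            mul_le_mul_of_nonneg_left (hFp ω) hs0.le
          have p7 : (1 - δ) / (1 - s) * ‖(K : ℝ)⁻¹ • ∑ k, Co (Δ k (t + 1) ω)‖ ^ 2
              ≤ (1 - δ) / (1 - s) * G ω :=
            mul_le_mul_of_nonneg_left (hGp ω) (div_nonneg hδ'.le hs'.le)
          linarith
        · rw [integral_add (hFi.const_mul _) (hGi.const_mul _),
            integral_const_mul, integral_const_mul]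
          have h4 : s * ∫ ω, F ω ∂P ≤ s * ((1 - δ) / (1 - s) ^ 2 * W) :=
            mul_le_mul_of_nonneg_left hFb hs0.le
          have h5 : (1 - δ) / (1 - s) * ∫ ω, G ω ∂P ≤ (1 - δ) / (1 - s) * W :=
            mul_le_mul_of_nonneg_left hGb (div_nonneg hδ'.le hs'.le)
          have h6 : s * ((1 - δ) / (1 - s) ^ 2 * W) + (1 - δ) / (1 - s) * W
              = (1 - δ) / (1 - s) ^ 2 * W := by
            field_simp
            ring
          linarith
  -- conclusion
  obtain ⟨F, hFi, hFp, hFb⟩ := hsrv (t + 1)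
  have hmono : ∫ ω, ‖esrv (t + 1) ω‖ ^ 2 ∂P ≤ ∫ ω, F ω ∂P :=
    integral_mono_of_nonneg (Filter.Eventually.of_forall fun ω => by positivity)
      hFi (Filter.Eventually.of_forall hFp)
  have hfin : (1 - δ) / (1 - s) ^ 2 * W
      = ((1 - δ) / (1 - s) ^ 2)
          * (2 * (2 - δ) * (1 + 1 / β₁) / (1 - ρ))
          * (ηmax ^ 2 * S / (1 - μ) ^ 2) := by
    rw [hW, hD]
    field_simp
  calc ∫ ω, ‖esrv (t + 1) ω‖ ^ 2 ∂P ≤ ∫ ω, F ω ∂P := hmono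
    _ ≤ (1 - δ) / (1 - s) ^ 2 * W := hFb
    _ = _ := by rw [hfin]
end
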